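/- arXiv:0807.4068 — 6 statements merged into one kernel-verified Lean document; each statement's English description precedes it below -/
import Mathlib

section
/- Let G be a connected graph on a countably infinite vertex set in which every vertex has degree exactly v (v ≥ 2). Then μ₀(G) ≤ v·h(G), where h(G) is the Cheeger constant of G and μ₀(G) is the bottom of the spectrum of the combinatorial Laplacian of G. -/
open Classical

/-- The combinatorial Dirichlet energy of `f` on the graph `G`:
the sum over edges `{i,j}` of `(f i - f j)^2`, written as half the sum over
ordered adjacent pairs. -/
noncomputable def edgeEnergy {V : Type} (G : SimpleGraph V) (f : V → ℝ) : ℝ :=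
  (1 / 2) * ∑' p : V × V, if G.Adj p.1 p.2 then (f p.1 - f p.2) ^ 2 else 0

/-- The squared `ℓ²`-norm of a function on the vertices. -/
noncomputable def vertexNormSq {V : Type} (f : V → ℝ) : ℝ := ∑' i : V, f i ^ 2

/-- The (inner vertex-)boundary of a set `F` of vertices: the vertices of `F`
adjacent to at least one vertex outside `F`. -/
def innerBoundary {V : Type} (G : SimpleGraph V) (F : Set V) : Set V :=
  {x ∈ F | ∃ y ∉ F, G.Adj x y}

/-- The Cheeger constant of `G`: the infimum over nonempty finite vertex sets `F`
of `#∂F / #F`. -/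
noncomputable def cheegerConst {V : Type} (G : SimpleGraph V) : ℝ :=
  sInf {r : ℝ | ∃ F : Finset V, F.Nonempty ∧
    r = (innerBoundary G (F : Set V)).ncard / F.card}

/-- The bottom of the spectrum of the combinatorial Laplacian on `G`:
the infimum of the Rayleigh quotients of finitely supported nonzero functions. -/
noncomputable def mu0 {V : Type} (G : SimpleGraph V) : ℝ :=
  sInf {r : ℝ | ∃ f : V → ℝ, (Function.support f).Finite ∧ f ≠ 0 ∧
    r = edgeEnergy G f / vertexNormSq f}

lemma edgeEnergy_nonneg {V : Type} (G : SimpleGraph V) (f : V → ℝ) :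
    0 ≤ edgeEnergy G f := by
  unfold edgeEnergy
  have h : 0 ≤ ∑' p : V × V, if G.Adj p.1 p.2 then (f p.1 - f p.2) ^ 2 else 0 := by
    apply tsum_nonneg
    intro p
    split <;> positivity
  linarith

/-- Key step: testing `mu0` against the indicator function of a finite set. -/
lemma mu0_le_indicator {V : Type} (G : SimpleGraph V) (v : ℕ) (hv : 2 ≤ v)
    (hdeg : ∀ x : V, (G.neighborSet x).ncard = v) (F : Finset V) (hF : F.Nonempty) :
    mu0 G ≤ (v : ℝ) * ((innerBoundary G (F : Set V)).ncard / F.card) := by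
  classical
  have hfin : ∀ x : V, (G.neighborSet x).Finite := by
    intro x
    by_contra h
    have h2 := hdeg x
    rw [Set.Infinite.ncard (Set.not_infinite.not_right.mp h)] at h2
    omega
  set f : V → ℝ := fun i => if i ∈ F then 1 else 0 with hfdef
  have hsupp : (Function.support f).Finite := by
    apply Set.Finite.subset F.finite_toSet
    intro x hx
    simp only [Function.mem_support, hfdef] at hx
    by_contra hxF
    rw [Finset.mem_coe] at hxF
    simp [hxF] at hx
  have hne : f ≠ 0 := by
    obtain ⟨x, hx⟩ := hF
    intro h
    have := congrFun h x
    simp [hfdef, hx] at this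
  -- the boundary as a finset
  set B : Finset V := F.filter (fun x => ∃ y, y ∉ F ∧ G.Adj x y) with hBdef
  have hBcoe : innerBoundary G (F : Set V) = (B : Set V) := by
    ext x
    simp [innerBoundary, hBdef]
  have hBncard : (innerBoundary G (F : Set V)).ncard = B.card := by
    rw [hBcoe, Set.ncard_coe_finset]
  -- the norm
  have hnorm : vertexNormSq f = F.card := by
    unfold vertexNormSq
    rw [tsum_eq_sum (s := F) (by intro i hi; simp [hfdef, hi])]
    have h1 : ∀ i ∈ F, f i ^ 2 = 1 := fun i hi => by simp [hfdef, hi]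
    rw [Finset.sum_congr rfl h1, Finset.sum_const]
    simp
  -- the energy
  set g : V × V → ℝ := fun p => if G.Adj p.1 p.2 then (f p.1 - f p.2) ^ 2 else 0 with hgdef
  have hgnn : ∀ p, 0 ≤ g p := by
    intro p; simp only [hgdef]; split <;> positivity
  have hgsymm : ∀ x y, g (x, y) = g (y, x) := by
    intro x y
    simp only [hgdef]
    by_cases h : G.Adj x y
    · rw [if_pos h, if_pos h.symm]; ring
    · rw [if_neg h, if_neg (fun h' => h h'.symm)]
  set NB : Finset V := F.biUnion (fun x => (hfin x).toFinset) with hNBdef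
  set T : Finset (V × V) := F ×ˢ NB ∪ NB ×ˢ F with hTdef
  have hgT : ∀ p ∉ T, g p = 0 := by
    intro p hp
    by_contra hg
    apply hp
    simp only [hgdef] at hg
    have hadj : G.Adj p.1 p.2 := by by_contra h; simp [h] at hg
    rw [if_pos hadj] at hg
    have hne12 : f p.1 ≠ f p.2 := by
      intro h; apply hg; rw [h]; ring
    simp only [hTdef, Finset.mem_union, Finset.mem_product]
    by_cases h1 : p.1 ∈ F
    · left
      refine ⟨h1, ?_⟩
      simp only [hNBdef, Finset.mem_biUnion]
      exact ⟨p.1, h1, by simp [SimpleGraph.mem_neighborSet, hadj]⟩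
    · right
      have h2 : p.2 ∈ F := by
        by_contra h2
        apply hne12
        simp [hfdef, h1, h2]
      refine ⟨?_, h2⟩
      simp only [hNBdef, Finset.mem_biUnion]
      exact ⟨p.2, h2, by simp [SimpleGraph.mem_neighborSet, hadj.symm]⟩
  -- bound the half-sum over F ×ˢ NB
  have hrow : ∀ x ∈ F, ∑ y ∈ NB, g (x, y) ≤ if x ∈ B then (v : ℝ) else 0 := by
    intro x hxF
    by_cases hxB : x ∈ B
    · rw [if_pos hxB]
      have hle : ∀ y ∈ NB, g (x, y) ≤ if y ∈ (hfin x).toFinset then (1:ℝ) else 0 := by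
        intro y _
        simp only [hgdef]
        by_cases h : G.Adj x y
        · rw [if_pos h, if_pos (by simp [SimpleGraph.mem_neighborSet, h])]
          have h1 : f x = 1 := by simp [hfdef, hxF]
          by_cases hy : y ∈ F
          · have : f y = 1 := by simp [hfdef, hy]
            rw [h1, this]; norm_num
          · have : f y = 0 := by simp [hfdef, hy]
            rw [h1, this]; norm_num
        · rw [if_neg h]
          split <;> norm_num
      calc ∑ y ∈ NB, g (x, y) ≤ ∑ y ∈ NB, (if y ∈ (hfin x).toFinset then (1:ℝ) else 0) :=
            Finset.sum_le_sum hle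
        _ = ((NB ∩ (hfin x).toFinset).card : ℝ) := by
            rw [Finset.sum_ite_mem, Finset.sum_const]; simp
        _ ≤ ((hfin x).toFinset.card : ℝ) := by
            exact_mod_cast Finset.card_le_card (Finset.inter_subset_right)
        _ = (v : ℝ) := by
            rw [← Set.ncard_eq_toFinset_card _ (hfin x), hdeg x]
    · rw [if_neg hxB]
      apply le_of_eq
      apply Finset.sum_eq_zero
      intro y hy
      simp only [hgdef]
      by_cases h : G.Adj x y
      · rw [if_pos h]
        have hyF : y ∈ F := by
          by_contra hyF
          exact hxB (by simp [hBdef, hxF]; exact ⟨y, hyF, h⟩)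
        simp [hfdef, hxF, hyF]
      · rw [if_neg h]
  have hhalf : ∑ p ∈ F ×ˢ NB, g p ≤ (v : ℝ) * B.card := by
    rw [Finset.sum_product]
    calc ∑ x ∈ F, ∑ y ∈ NB, g (x, y) ≤ ∑ x ∈ F, (if x ∈ B then (v:ℝ) else 0) :=
          Finset.sum_le_sum hrow
      _ = ∑ x ∈ F ∩ B, (v : ℝ) := Finset.sum_ite_mem F B _
      _ = (F ∩ B).card * (v:ℝ) := by rw [Finset.sum_const]; simp
      _ = (v : ℝ) * B.card := by
          rw [Finset.inter_eq_right.mpr (Finset.filter_subset _ F)]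
          ring
  have hswap : ∑ p ∈ NB ×ˢ F, g p = ∑ p ∈ F ×ˢ NB, g p := by
    rw [Finset.sum_product, Finset.sum_product, Finset.sum_comm]
    exact Finset.sum_congr rfl (fun y _ => Finset.sum_congr rfl (fun x _ => hgsymm x y))
  have henergy : edgeEnergy G f ≤ (v : ℝ) * B.card := by
    unfold edgeEnergy
    rw [show (∑' p : V × V, if G.Adj p.1 p.2 then (f p.1 - f p.2) ^ 2 else 0) = ∑' p, g p from rfl]
    rw [tsum_eq_sum (s := T) hgT]
    have hunion : ∑ p ∈ T, g p ≤ ∑ p ∈ F ×ˢ NB, g p + ∑ p ∈ NB ×ˢ F, g p := by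
      have h := Finset.sum_union_inter (s₁ := F ×ˢ NB) (s₂ := NB ×ˢ F) (f := g)
      have hint : 0 ≤ ∑ p ∈ (F ×ˢ NB) ∩ (NB ×ˢ F), g p :=
        Finset.sum_nonneg (fun p _ => hgnn p)
      rw [hTdef]
      linarith
    rw [hswap] at hunion
    have : ∑ p ∈ T, g p ≤ 2 * ((v:ℝ) * B.card) := by linarith
    linarith
  -- assemble the Rayleigh quotient bound
  have hFcard : (0:ℝ) < F.card := by exact_mod_cast Finset.card_pos.mpr hF
  have hray : edgeEnergy G f / vertexNormSq f ≤ (v : ℝ) * ((innerBoundary G (F : Set V)).ncard / F.card) := by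
    rw [hnorm, hBncard]
    rw [div_le_iff₀ hFcard]
    calc edgeEnergy G f ≤ (v : ℝ) * B.card := henergy
      _ = (v : ℝ) * ((B.card : ℝ) / F.card) * F.card := by field_simp
  have hmem : edgeEnergy G f / vertexNormSq f ∈
      {r : ℝ | ∃ f : V → ℝ, (Function.support f).Finite ∧ f ≠ 0 ∧
        r = edgeEnergy G f / vertexNormSq f} := ⟨f, hsupp, hne, rfl⟩
  have hbdd : BddBelow {r : ℝ | ∃ f : V → ℝ, (Function.support f).Finite ∧ f ≠ 0 ∧
      r = edgeEnergy G f / vertexNormSq f} := by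
    refine ⟨0, ?_⟩
    rintro r ⟨h, _, _, rfl⟩
    apply div_nonneg (edgeEnergy_nonneg G h)
    exact tsum_nonneg (fun i => by positivity)
  exact le_trans (csInf_le hbdd hmem) hray

theorem mu0_le_degree_mul_cheeger (V : Type) [Countable V] [Infinite V]
    (G : SimpleGraph V) (hconn : G.Connected) (v : ℕ) (hv : 2 ≤ v)
    (hdeg : ∀ x : V, (G.neighborSet x).ncard = v) :
    mu0 G ≤ v * cheegerConst G := by
  classical
  have hv0 : (0:ℝ) < v := by
    have : (2:ℝ) ≤ v := by exact_mod_cast hv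
    linarith
  set S := {r : ℝ | ∃ F : Finset V, F.Nonempty ∧
    r = (innerBoundary G (F : Set V)).ncard / F.card} with hSdef
  have hSne : S.Nonempty := by
    obtain ⟨x⟩ : Nonempty V := inferInstance
    exact ⟨_, {x}, Finset.singleton_nonempty x, rfl⟩
  have hlow : ∀ r ∈ S, mu0 G / v ≤ r := by
    rintro r ⟨F, hF, rfl⟩
    rw [div_le_iff₀ hv0]
    calc mu0 G ≤ (v : ℝ) * ((innerBoundary G (F : Set V)).ncard / F.card) :=
          mu0_le_indicator G v hv hdeg F hF
      _ = (innerBoundary G (F : Set V)).ncard / F.card * v := by ring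
  have h1 : mu0 G / v ≤ sInf S := le_csInf hSne hlow
  have h2 : mu0 G ≤ sInf S * v := (div_le_iff₀ hv0).mp h1
  calc mu0 G ≤ sInf S * v := h2
    _ = v * cheegerConst G := by rw [cheegerConst, ← hSdef]; ring
end

section
/- Let G be a connected graph on a countably infinite vertex set in which every vertex has degree exactly v (v ≥ 2). Then h(G)² ≤ 2v·μ₀(G), where h(G) is the Cheeger constant of G and μ₀(G) is the bottom of the spectrum of the combinatorial Laplacian of G. -/
open Classical

lemma coarea_aux {V : Type} (G : SimpleGraph V) (h₀ : ℝ)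
    (hF : ∀ F : Finset V, F.Nonempty → h₀ * F.card ≤ (innerBoundary G (F : Set V)).ncard)
    (S : Finset V) (E : Finset (V × V))
    (hEsym : ∀ p ∈ E, p.swap ∈ E)
    (hEmem : ∀ x ∈ S, ∀ y, G.Adj x y → (x, y) ∈ E) :
    ∀ (n : ℕ) (g : V → ℝ), (∀ x, 0 ≤ g x) → (∀ x ∉ S, g x = 0) →
      (S.filter (fun x => g x ≠ 0)).card ≤ n →
      h₀ * ∑ x ∈ S, g x ≤ (1/2) * ∑ p ∈ E, |g p.1 - g p.2| := by
  intro n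
  induction n with
  | zero =>
    intro g hg hgS hcard
    have hz : ∀ x ∈ S, g x = 0 := by
      intro x hx
      by_contra h
      have : x ∈ S.filter (fun x => g x ≠ 0) := Finset.mem_filter.mpr ⟨hx, h⟩
      have := Finset.card_pos.mpr ⟨x, this⟩
      omega
    have h1 : ∑ x ∈ S, g x = 0 := Finset.sum_eq_zero hz
    rw [h1, mul_zero]
    positivity
  | succ n ih =>
    intro g hg hgS hcard
    set F := S.filter (fun x => g x ≠ 0) with hFdef
    by_cases hFne : F.Nonempty
    · -- minimum value of g on F
      set m := F.inf' hFne g with hmdef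
      obtain ⟨x₀, hx₀F, hx₀m⟩ := F.exists_mem_eq_inf' hFne g
      have hmle : ∀ x ∈ F, m ≤ g x := fun x hx => Finset.inf'_le g hx
      have hm_pos : 0 < m := by
        rcases lt_or_eq_of_le (hg x₀) with h | h
        · rw [hmdef, hx₀m]; exact h
        · exact absurd h.symm (Finset.mem_filter.mp hx₀F).2
      have hg0 : ∀ x, x ∉ F → g x = 0 := by
        intro x hx
        by_cases hxS : x ∈ S
        · by_contra h
          exact hx (Finset.mem_filter.mpr ⟨hxS, h⟩)
        · exact hgS x hxS
      set g' : V → ℝ := fun x => if x ∈ F then g x - m else 0 with hg'def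
      have hg'nn : ∀ x, 0 ≤ g' x := by
        intro x
        simp only [hg'def]
        split
        · linarith [hmle x ‹_›]
        · exact le_rfl
      have hg'S : ∀ x ∉ S, g' x = 0 := by
        intro x hx
        simp only [hg'def]
        rw [if_neg]
        intro hxF
        exact hx (Finset.filter_subset _ _ hxF)
      have hg'card : (S.filter (fun x => g' x ≠ 0)).card ≤ n := by
        have hsub : S.filter (fun x => g' x ≠ 0) ⊆ F.erase x₀ := by
          intro x hx
          obtain ⟨hxS, hxne⟩ := Finset.mem_filter.mp hx
          have hxF : x ∈ F := by
            by_contra h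
            exact hxne (by simp [hg'def, h])
          refine Finset.mem_erase.mpr ⟨?_, hxF⟩
          rintro rfl
          exact hxne (by simp [hg'def, hxF, ← hx₀m, hmdef])
        have := Finset.card_le_card hsub
        have := Finset.card_erase_of_mem hx₀F
        omega
      have IH := ih g' hg'nn hg'S hg'card
      -- sum decomposition
      have hsum : ∑ x ∈ S, g x = (∑ x ∈ S, g' x) + m * F.card := by
        have hpt : ∀ x ∈ S, g x = g' x + (if x ∈ F then m else 0) := by
          intro x hx
          by_cases h : x ∈ F
          · simp [hg'def, h]
          · simp [hg'def, h, hg0 x h]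
        rw [Finset.sum_congr rfl hpt, Finset.sum_add_distrib]
        congr 1
        rw [Finset.sum_ite_mem, Finset.inter_eq_right.mpr (Finset.filter_subset _ _),
          Finset.sum_const, nsmul_eq_mul, mul_comm]
      -- pointwise edge decomposition
      have hedge : ∀ p : V × V, |g p.1 - g p.2| = |g' p.1 - g' p.2| +
          m * ((if p.1 ∈ F ∧ p.2 ∉ F then (1:ℝ) else 0) +
               (if p.2 ∈ F ∧ p.1 ∉ F then (1:ℝ) else 0)) := by
        intro p
        have e : ∀ x, x ∈ F → g' x = g x - m := fun x hx => by simp [hg'def, hx]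
        have e' : ∀ x, x ∉ F → g' x = 0 := fun x hx => by simp [hg'def, hx]
        by_cases h1 : p.1 ∈ F <;> by_cases h2 : p.2 ∈ F
        · rw [e _ h1, e _ h2, if_neg (fun h => h.2 h2), if_neg (fun h => h.2 h1)]
          have : g p.1 - m - (g p.2 - m) = g p.1 - g p.2 := by ring
          rw [this]; ring
        · rw [hg0 _ h2, e _ h1, e' _ h2, if_pos ⟨h1, h2⟩, if_neg (fun h => h2 h.1),
            sub_zero, sub_zero, abs_of_nonneg (hg p.1),
            abs_of_nonneg (by linarith [hmle _ h1] : (0:ℝ) ≤ g p.1 - m)]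
          ring
        · rw [hg0 _ h1, e _ h2, e' _ h1, if_neg (fun h => h1 h.1), if_pos ⟨h2, h1⟩,
            zero_sub, abs_neg, zero_sub, abs_neg, abs_of_nonneg (hg p.2),
            abs_of_nonneg (by linarith [hmle _ h2] : (0:ℝ) ≤ g p.2 - m)]
          ring
        · rw [hg0 _ h1, hg0 _ h2, e' _ h1, e' _ h2, if_neg (fun h => h1 h.1),
            if_neg (fun h => h2 h.1)]
          ring
      -- crossing pairs
      set D := E.filter (fun p => p.1 ∈ F ∧ p.2 ∉ F) with hDdef
      have hsum1 : ∑ p ∈ E, (if p.1 ∈ F ∧ p.2 ∉ F then (1:ℝ) else 0) = D.card := by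
        rw [hDdef, Finset.sum_boole]
      have hsum2 : ∑ p ∈ E, (if p.2 ∈ F ∧ p.1 ∉ F then (1:ℝ) else 0)
          = ∑ p ∈ E, (if p.1 ∈ F ∧ p.2 ∉ F then (1:ℝ) else 0) := by
        apply Finset.sum_equiv (Equiv.prodComm V V)
        · intro p
          constructor
          · intro hp; exact hEsym p hp
          · intro hp
            have := hEsym _ hp
            simpa using this
        · intro p hp
          rfl
      -- boundary vs crossing pairs
      have hBD : ((innerBoundary G (F : Set V)).ncard : ℝ) ≤ D.card := by
        have hBfin : (innerBoundary G (F : Set V)).Finite :=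
          Set.Finite.subset F.finite_toSet (fun x hx => hx.1)
        rw [Set.ncard_eq_toFinset_card _ hBfin]
        have hcle : hBfin.toFinset.card ≤ D.card := by
          apply Finset.card_le_card_of_injOn
            (fun x => (x, if h : ∃ y, y ∉ (F : Set V) ∧ G.Adj x y then h.choose else x))
          · intro x hx
            rw [Finset.mem_coe, Set.Finite.mem_toFinset] at hx; rw [Finset.mem_coe]; dsimp only
            obtain ⟨hxF, hex⟩ := hx
            rw [dif_pos hex]
            obtain ⟨hy1, hy2⟩ := hex.choose_spec
            refine Finset.mem_filter.mpr ⟨?_, ?_, ?_⟩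
            · exact hEmem x (Finset.filter_subset _ _ hxF) _ hy2
            · exact hxF
            · simpa using hy1
          · intro x _ x' _ h
            exact congrArg Prod.fst h
        exact_mod_cast hcle
      have hFb := hF F hFne
      -- combine
      calc h₀ * ∑ x ∈ S, g x = h₀ * ∑ x ∈ S, g' x + (h₀ * F.card) * m := by
            rw [hsum]; ring
        _ ≤ (1/2) * ∑ p ∈ E, |g' p.1 - g' p.2| + (D.card : ℝ) * m := by
            apply add_le_add IH
            apply mul_le_mul_of_nonneg_right _ hm_pos.le
            exact le_trans hFb hBD
        _ = (1/2) * ∑ p ∈ E, |g p.1 - g p.2| := by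
            rw [Finset.sum_congr rfl (fun p _ => hedge p)]
            rw [Finset.sum_add_distrib, ← Finset.mul_sum, Finset.sum_add_distrib,
              hsum2, hsum1]
            ring
    · have hc0 : F.card ≤ n := by
        rw [Finset.card_eq_zero.mpr (Finset.not_nonempty_iff_eq_empty.mp hFne)]
        omega
      exact ih g hg hgS hc0


theorem cheeger_sq_le_two_degree_mul_mu0 (V : Type) [Countable V] [Infinite V]
    (G : SimpleGraph V) (hconn : G.Connected) (v : ℕ) (hv : 2 ≤ v)
    (hdeg : ∀ x : V, (G.neighborSet x).ncard = v) :
    cheegerConst G ^ 2 ≤ 2 * v * mu0 G := by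
  classical
  have hNfin : ∀ x : V, (G.neighborSet x).Finite := by
    intro x
    by_contra h
    have h' : (G.neighborSet x).Infinite := h
    have := h'.ncard
    rw [hdeg x] at this
    omega
  have h2v : (0:ℝ) < 2 * (v:ℝ) := by
    have : (0:ℕ) < 2 * v := by omega
    exact_mod_cast this
  -- Cheeger constant facts
  have hCbdd : BddBelow {r : ℝ | ∃ F : Finset V, F.Nonempty ∧
      r = (innerBoundary G (F : Set V)).ncard / F.card} := by
    refine ⟨0, ?_⟩
    rintro r ⟨F, hFne, rfl⟩
    positivity
  have h₀nn : 0 ≤ cheegerConst G := by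
    apply Real.sInf_nonneg
    rintro r ⟨F, hFne, rfl⟩
    positivity
  have hF : ∀ F : Finset V, F.Nonempty →
      cheegerConst G * F.card ≤ ((innerBoundary G (F : Set V)).ncard : ℝ) := by
    intro F hFne
    have hmem : ((innerBoundary G (F : Set V)).ncard : ℝ) / F.card ∈
        {r : ℝ | ∃ F : Finset V, F.Nonempty ∧
          r = (innerBoundary G (F : Set V)).ncard / F.card} := ⟨F, hFne, rfl⟩
    have hle := csInf_le hCbdd hmem
    have hc : (0:ℝ) < F.card := by exact_mod_cast Finset.card_pos.mpr hFne
    exact (le_div_iff₀ hc).mp hle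
  -- the key bound for each Rayleigh quotient
  have key : ∀ r ∈ {r : ℝ | ∃ f : V → ℝ, (Function.support f).Finite ∧ f ≠ 0 ∧
      r = edgeEnergy G f / vertexNormSq f}, cheegerConst G ^ 2 / (2 * v) ≤ r := by
    rintro r ⟨f, hfin, hf0, rfl⟩
    set S := hfin.toFinset with hSdef
    set N := S.biUnion (fun x => (hNfin x).toFinset) with hNdef
    set T := S ∪ N with hTdef
    set E := (T ×ˢ T).filter (fun p => G.Adj p.1 p.2) with hEdef
    have hfS : ∀ x ∉ S, f x = 0 := by
      intro x hx
      by_contra h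
      exact hx (hfin.mem_toFinset.mpr h)
    have hST : S ⊆ T := Finset.subset_union_left
    have hNT : N ⊆ T := Finset.subset_union_right
    have hmemN : ∀ x ∈ S, ∀ y, G.Adj x y → y ∈ N := fun x hx y hadj =>
      Finset.mem_biUnion.mpr ⟨x, hx, (hNfin x).mem_toFinset.mpr hadj⟩
    have hEsym : ∀ p ∈ E, p.swap ∈ E := by
      intro p hp
      obtain ⟨hpT, hadj⟩ := Finset.mem_filter.mp hp
      obtain ⟨h1, h2⟩ := Finset.mem_product.mp hpT
      exact Finset.mem_filter.mpr ⟨Finset.mem_product.mpr ⟨h2, h1⟩, hadj.symm⟩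
    have hEadj : ∀ p ∈ E, G.Adj p.1 p.2 := fun p hp => (Finset.mem_filter.mp hp).2
    have hEtouch : ∀ p : V × V, G.Adj p.1 p.2 → (f p.1 ≠ 0 ∨ f p.2 ≠ 0) → p ∈ E := by
      intro p hadj hne
      rcases hne with h | h
      · have h1 : p.1 ∈ S := hfin.mem_toFinset.mpr h
        have h2 : p.2 ∈ N := hmemN _ h1 _ hadj
        exact Finset.mem_filter.mpr ⟨Finset.mem_product.mpr ⟨hST h1, hNT h2⟩, hadj⟩
      · have h2 : p.2 ∈ S := hfin.mem_toFinset.mpr h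
        have h1 : p.1 ∈ N := hmemN _ h2 _ hadj.symm
        exact Finset.mem_filter.mpr ⟨Finset.mem_product.mpr ⟨hNT h1, hST h2⟩, hadj⟩
    have hEmem : ∀ x ∈ S, ∀ y, G.Adj x y → (x, y) ∈ E := by
      intro x hx y hadj
      exact Finset.mem_filter.mpr
        ⟨Finset.mem_product.mpr ⟨hST hx, hNT (hmemN x hx y hadj)⟩, hadj⟩
    -- energies as finite sums
    have hEE : edgeEnergy G f = (1/2) * ∑ p ∈ E, (f p.1 - f p.2) ^ 2 := by
      unfold edgeEnergy
      congr 1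
      rw [tsum_eq_sum (s := E) ?_]
      · exact Finset.sum_congr rfl (fun p hp => if_pos (hEadj p hp))
      · intro p hp
        by_cases hadj : G.Adj p.1 p.2
        · rw [if_pos hadj]
          by_cases h1 : f p.1 = 0
          · by_cases h2 : f p.2 = 0
            · rw [h1, h2]; ring
            · exact absurd (hEtouch p hadj (Or.inr h2)) hp
          · exact absurd (hEtouch p hadj (Or.inl h1)) hp
        · exact if_neg hadj
    have hA : vertexNormSq f = ∑ x ∈ S, f x ^ 2 := by
      unfold vertexNormSq
      exact tsum_eq_sum (fun x hx => by rw [hfS x hx]; ring)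
    set A := ∑ x ∈ S, f x ^ 2 with hAdef
    have hApos : 0 < A := by
      have hex : ∃ x, f x ≠ 0 := by
        by_contra h
        push_neg at h
        exact hf0 (funext h)
      obtain ⟨x, hx⟩ := hex
      exact Finset.sum_pos' (fun i _ => sq_nonneg _)
        ⟨x, hfin.mem_toFinset.mpr hx, by positivity⟩
    -- degree bound on pair sums
    have hdegT : ∀ x : V, ((T.filter (fun y => G.Adj x y)).card : ℝ) ≤ v := by
      intro x
      have hsub : T.filter (fun y => G.Adj x y) ⊆ (hNfin x).toFinset := fun y hy =>
        (hNfin x).mem_toFinset.mpr (Finset.mem_filter.mp hy).2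
      have hle := Finset.card_le_card hsub
      have hcard : (hNfin x).toFinset.card = v := by
        rw [← Set.ncard_eq_toFinset_card _ (hNfin x)]
        exact hdeg x
      rw [hcard] at hle
      exact_mod_cast hle
    have hTA : ∑ x ∈ T, f x ^ 2 = A := by
      refine (Finset.sum_subset hST ?_).symm
      intro x _ hxS
      rw [hfS x hxS]; ring
    have hsum1 : ∑ p ∈ E, f p.1 ^ 2 ≤ (v : ℝ) * A := by
      rw [hEdef, Finset.sum_filter, Finset.sum_product]
      have hinner : ∀ x ∈ T, (∑ y ∈ T, if G.Adj x y then f x ^ 2 else 0)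
          ≤ (v : ℝ) * f x ^ 2 := by
        intro x _
        rw [← Finset.sum_filter, Finset.sum_const, nsmul_eq_mul]
        exact mul_le_mul_of_nonneg_right (hdegT x) (sq_nonneg _)
      calc ∑ x ∈ T, ∑ y ∈ T, (if G.Adj x y then f x ^ 2 else 0)
          ≤ ∑ x ∈ T, (v : ℝ) * f x ^ 2 := Finset.sum_le_sum hinner
        _ = (v : ℝ) * ∑ x ∈ T, f x ^ 2 := by rw [Finset.mul_sum]
        _ = (v : ℝ) * A := by rw [hTA]
    have hsum2 : ∑ p ∈ E, f p.2 ^ 2 = ∑ p ∈ E, f p.1 ^ 2 := by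
      apply Finset.sum_equiv (Equiv.prodComm V V)
      · intro p
        constructor
        · intro hp; exact hEsym p hp
        · intro hp; simpa using hEsym _ hp
      · intro p hp; rfl
    -- Cauchy-Schwarz
    set C := ∑ p ∈ E, |f p.1 ^ 2 - f p.2 ^ 2| with hCdef
    set En := ∑ p ∈ E, (f p.1 - f p.2) ^ 2 with hEndef
    have hEnnn : 0 ≤ En := Finset.sum_nonneg (fun p _ => sq_nonneg _)
    have hCnn : 0 ≤ C := Finset.sum_nonneg (fun p _ => abs_nonneg _)
    have hCS : C ^ 2 ≤ En * (4 * v * A) := by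
      have h1 : C = ∑ p ∈ E, |f p.1 - f p.2| * |f p.1 + f p.2| := by
        refine Finset.sum_congr rfl (fun p _ => ?_)
        rw [← abs_mul]
        congr 1
        ring
      have h2 := Finset.sum_mul_sq_le_sq_mul_sq E
        (fun p => |f p.1 - f p.2|) (fun p => |f p.1 + f p.2|)
      have h3 : ∑ p ∈ E, |f p.1 - f p.2| ^ 2 = En :=
        Finset.sum_congr rfl (fun p _ => sq_abs _)
      have h4 : ∑ p ∈ E, |f p.1 + f p.2| ^ 2 ≤ 4 * v * A := by
        calc ∑ p ∈ E, |f p.1 + f p.2| ^ 2 = ∑ p ∈ E, (f p.1 + f p.2) ^ 2 :=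
              Finset.sum_congr rfl (fun p _ => sq_abs _)
          _ ≤ ∑ p ∈ E, (2 * f p.1 ^ 2 + 2 * f p.2 ^ 2) :=
              Finset.sum_le_sum (fun p _ => by nlinarith [sq_nonneg (f p.1 - f p.2)])
          _ = 2 * (∑ p ∈ E, f p.1 ^ 2) + 2 * (∑ p ∈ E, f p.2 ^ 2) := by
              rw [Finset.sum_add_distrib, Finset.mul_sum, Finset.mul_sum]
          _ ≤ 4 * v * A := by
              rw [hsum2]
              linarith [hsum1]
      calc C ^ 2 = (∑ p ∈ E, |f p.1 - f p.2| * |f p.1 + f p.2|) ^ 2 := by rw [h1]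
        _ ≤ (∑ p ∈ E, |f p.1 - f p.2| ^ 2) * ∑ p ∈ E, |f p.1 + f p.2| ^ 2 := h2
        _ = En * ∑ p ∈ E, |f p.1 + f p.2| ^ 2 := by rw [h3]
        _ ≤ En * (4 * v * A) := mul_le_mul_of_nonneg_left h4 hEnnn
    -- co-area estimate
    have hco : cheegerConst G * A ≤ (1/2) * C :=
      coarea_aux G (cheegerConst G) hF S E hEsym hEmem S.card (fun x => f x ^ 2)
        (fun x => sq_nonneg _) (fun x hx => by show f x ^ 2 = 0; rw [hfS x hx]; ring)
        (Finset.card_le_card (Finset.filter_subset _ _))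
    -- combine
    have hkey : cheegerConst G ^ 2 * A ≤ (v : ℝ) * En := by
      have s1 : (cheegerConst G * A) * (cheegerConst G * A) ≤ ((1/2) * C) * ((1/2) * C) :=
        mul_self_le_mul_self (mul_nonneg h₀nn hApos.le) hco
      nlinarith [hCS, hApos]
    rw [hEE, hA, div_le_div_iff₀ h2v hApos]
    nlinarith [hkey]
  -- nonemptiness of the Rayleigh-quotient set
  have hmu_ne : Set.Nonempty {r : ℝ | ∃ f : V → ℝ, (Function.support f).Finite ∧ f ≠ 0 ∧
      r = edgeEnergy G f / vertexNormSq f} := by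
    obtain ⟨x⟩ : Nonempty V := inferInstance
    refine ⟨_, fun y => if y = x then (1:ℝ) else 0, ?_, ?_, rfl⟩
    · apply Set.Finite.subset (Set.finite_singleton x)
      intro y hy
      rw [Function.mem_support] at hy
      by_contra h
      simp only [Set.mem_singleton_iff] at h
      exact hy (if_neg h)
    · intro h
      have := congrFun h x
      simp at this
  have hle : cheegerConst G ^ 2 / (2 * v) ≤ mu0 G := le_csInf hmu_ne key
  have := (div_le_iff₀ h2v).mp hle
  linarith [this]
end

section
/- Let G be a connected graph on a countably infinite vertex set in which every vertex has degree exactly v (v ≥ 2). Then G is amenable if and only if the bottom of the spectrum of its combinatorial Laplacian vanishes; that is, h(G) = 0 if and only if μ₀(G) = 0. -/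
open Classical

section Aux
variable {V : Type} (G : SimpleGraph V)

lemma cheeger_nonneg : 0 ≤ cheegerConst G := by
  apply Real.sInf_nonneg
  rintro r ⟨F, hF, rfl⟩
  positivity

noncomputable def bigT (hfin : ∀ x : V, (G.neighborSet x).Finite) (F : Finset V) : Finset V :=
  F ∪ F.biUnion fun i => (hfin i).toFinset

variable (hfin : ∀ x : V, (G.neighborSet x).Finite)

lemma subset_bigT (F : Finset V) : F ⊆ bigT G hfin F := Finset.subset_union_left

lemma mem_bigT_of_adj {F : Finset V} {i j : V} (hi : i ∈ F) (h : G.Adj i j) :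
    j ∈ bigT G hfin F := by
  apply Finset.mem_union_right
  exact Finset.mem_biUnion.mpr ⟨i, hi, (hfin i).mem_toFinset.mpr h⟩

lemma tsum_pair_eq (F : Finset V) (w : ℝ → ℝ → ℝ) (hw : w 0 0 = 0)
    (g : V → ℝ) (hg : ∀ i ∉ F, g i = 0) :
    ∑' p : V × V, (if G.Adj p.1 p.2 then w (g p.1) (g p.2) else 0)
      = ∑ p ∈ (bigT G hfin F) ×ˢ (bigT G hfin F),
          (if G.Adj p.1 p.2 then w (g p.1) (g p.2) else 0) := by
  apply tsum_eq_sum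
  rintro ⟨i, j⟩ hp
  simp only [Finset.mem_product, not_and_or] at hp
  by_cases hadj : G.Adj i j
  · rw [if_pos hadj]
    have hgi : g i = 0 := by
      by_contra h
      have hi : i ∈ F := by by_contra h'; exact h (hg i h')
      rcases hp with h1 | h2
      · exact h1 (subset_bigT G hfin F hi)
      · exact h2 (mem_bigT_of_adj G hfin hi hadj)
    have hgj : g j = 0 := by
      by_contra h
      have hj : j ∈ F := by by_contra h'; exact h (hg j h')
      rcases hp with h1 | h2
      · exact h1 (mem_bigT_of_adj G hfin hj hadj.symm)
      · exact h2 (subset_bigT G hfin F hj)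
    rw [hgi, hgj, hw]
  · rw [if_neg hadj]

noncomputable def bdryF (F : Finset V) : Finset V :=
  F.filter fun i => ∃ j, j ∉ F ∧ G.Adj i j

lemma bdry_ncard (F : Finset V) :
    (innerBoundary G (F : Set V)).ncard = (bdryF G F).card := by
  rw [← Set.ncard_coe_finset]
  congr 1
  ext x
  simp [innerBoundary, bdryF]

lemma mem_bdryF {F : Finset V} {i j : V} (hi : i ∈ F) (hj : j ∉ F) (h : G.Adj i j) :
    i ∈ bdryF G F := Finset.mem_filter.mpr ⟨hi, j, hj, h⟩

lemma cheeger_mul_card_le (F : Finset V) (hF : F.Nonempty) :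
    cheegerConst G * F.card ≤ (bdryF G F).card := by
  have hc : (0:ℝ) < F.card := by exact_mod_cast hF.card_pos
  have h1 : cheegerConst G ≤ (bdryF G F).card / F.card := by
    apply csInf_le
    · exact ⟨0, by rintro r ⟨F', hF', rfl⟩; positivity⟩
    · exact ⟨F, hF, by rw [bdry_ncard]⟩
  calc cheegerConst G * F.card ≤ ((bdryF G F).card / F.card) * F.card :=
        mul_le_mul_of_nonneg_right h1 hc.le
    _ = (bdryF G F).card := by field_simp

lemma pointwise_coarea (F' : Finset V) (g : V → ℝ) (t : ℝ) (ht : 0 < t)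
    (hmin : ∀ i ∈ F', t ≤ g i) (hz : ∀ i ∉ F', g i = 0) (i j : V) :
    |g i - g j| = t * |(if i ∈ F' then (1:ℝ) else 0) - (if j ∈ F' then (1:ℝ) else 0)|
      + |(g i - t * (if i ∈ F' then (1:ℝ) else 0)) - (g j - t * (if j ∈ F' then (1:ℝ) else 0))| := by
  by_cases hi : i ∈ F' <;> by_cases hj : j ∈ F'
  · simp only [hi, hj, if_true, mul_one, sub_self, abs_zero, mul_zero, zero_add]
    ring_nf
  · have hgj := hz j hj
    simp only [hi, hj, if_true, if_false, mul_one, mul_zero, hgj, sub_zero, abs_one]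
    rw [abs_of_nonneg (ht.le.trans (hmin i hi)), abs_of_nonneg (sub_nonneg.mpr (hmin i hi))]
    ring
  · have hgi := hz i hi
    simp only [hi, hj, if_true, if_false, mul_one, mul_zero, hgi, sub_zero, zero_sub, abs_neg, abs_one]
    rw [abs_of_nonneg (ht.le.trans (hmin j hj)), abs_of_nonneg (sub_nonneg.mpr (hmin j hj))]
    ring
  · simp only [hi, hj, if_false, mul_zero, sub_self, abs_zero, mul_zero, zero_add, sub_zero,
      hz i hi, hz j hj]

lemma coarea (hfin : ∀ x : V, (G.neighborSet x).Finite) (n : ℕ) :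
    ∀ (F : Finset V) (g : V → ℝ), F.card ≤ n → (∀ i, 0 ≤ g i) → (∀ i ∉ F, g i = 0) →
    cheegerConst G * ∑ i ∈ F, g i ≤
      (1/2) * ∑' p : V × V, (if G.Adj p.1 p.2 then |g p.1 - g p.2| else 0) := by
  induction n with
  | zero =>
    intro F g hcard hg0 hgF
    have hF : F = ∅ := Finset.card_eq_zero.mp (Nat.le_zero.mp hcard)
    rw [hF, Finset.sum_empty, mul_zero]
    have : (0:ℝ) ≤ ∑' p : V × V, (if G.Adj p.1 p.2 then |g p.1 - g p.2| else 0) :=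
      tsum_nonneg fun p => by positivity
    linarith
  | succ n ih =>
    intro F g hcard hg0 hgF
    by_cases hne : (F.filter (fun i => g i ≠ 0)).Nonempty
    case neg =>
      have hz : ∀ i ∈ F, g i = 0 := by
        intro i hiF
        by_contra h
        exact hne ⟨i, Finset.mem_filter.mpr ⟨hiF, h⟩⟩
      rw [Finset.sum_eq_zero hz, mul_zero]
      have : (0:ℝ) ≤ ∑' p : V × V, (if G.Adj p.1 p.2 then |g p.1 - g p.2| else 0) :=
        tsum_nonneg fun p => by positivity
      linarith
    case pos =>
    set F' := F.filter (fun i => g i ≠ 0) with hF'def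
    have hF'sub : F' ⊆ F := Finset.filter_subset _ _
    obtain ⟨i₀, hi₀, hmin⟩ := F'.exists_min_image g hne
    set t := g i₀ with htdef
    have ht0 : 0 < t := lt_of_le_of_ne (hg0 i₀) (Ne.symm (Finset.mem_filter.mp hi₀).2)
    have hzF' : ∀ i ∉ F', g i = 0 := by
      intro i hi
      by_cases hiF : i ∈ F
      · by_contra h; exact hi (Finset.mem_filter.mpr ⟨hiF, h⟩)
      · exact hgF i hiF
    set χ : V → ℝ := fun i => if i ∈ F' then (1:ℝ) else 0 with hχdef
    set g' : V → ℝ := fun i => g i - t * χ i with hg'def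
    have hχ1 : ∀ i ∈ F', χ i = 1 := fun i hi => by simp [hχdef, hi]
    have hχ0 : ∀ i ∉ F', χ i = 0 := fun i hi => by simp [hχdef, hi]
    have hg'0 : ∀ i, 0 ≤ g' i := by
      intro i
      by_cases hi : i ∈ F'
      · simp only [hg'def, hχdef, if_pos hi, mul_one]
        linarith [hmin i hi]
      · simp only [hg'def, hχdef, if_neg hi, mul_zero, sub_zero]
        exact hg0 i
    have hg'i₀ : g' i₀ = 0 := by
      simp only [hg'def, hχdef, if_pos hi₀, mul_one]
      simp [htdef]
    have hg'z : ∀ i ∉ F'.erase i₀, g' i = 0 := by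
      intro i hi
      by_cases hiF : i ∈ F'
      · have : i = i₀ := by
          by_contra h; exact hi (Finset.mem_erase.mpr ⟨h, hiF⟩)
        rw [this]; exact hg'i₀
      · simp only [hg'def, hχ0 i hiF, mul_zero, sub_zero]
        exact hzF' i hiF
    have hg'F : ∀ i ∉ F, g' i = 0 := fun i hi =>
      hg'z i (fun h => hi (hF'sub (Finset.mem_erase.mp h).2))
    -- finset sums over D
    set T := bigT G hfin F with hTdef
    set D := T ×ˢ T with hDdef
    set Sg := ∑ p ∈ D, (if G.Adj p.1 p.2 then |g p.1 - g p.2| else 0) with hSg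
    set Sχ := ∑ p ∈ D, (if G.Adj p.1 p.2 then |χ p.1 - χ p.2| else 0) with hSχ
    set Sg' := ∑ p ∈ D, (if G.Adj p.1 p.2 then |g' p.1 - g' p.2| else 0) with hSg'
    have convg : ∑' p : V × V, (if G.Adj p.1 p.2 then |g p.1 - g p.2| else 0) = Sg :=
      tsum_pair_eq G hfin F (fun a b => |a - b|) (by simp) g hgF
    have convg' : ∑' p : V × V, (if G.Adj p.1 p.2 then |g' p.1 - g' p.2| else 0) = Sg' :=
      tsum_pair_eq G hfin F (fun a b => |a - b|) (by simp) g' hg'F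
    have hsplit : Sg = t * Sχ + Sg' := by
      rw [hSg, hSχ, hSg', Finset.mul_sum, ← Finset.sum_add_distrib]
      apply Finset.sum_congr rfl
      intro p _
      by_cases h : G.Adj p.1 p.2
      · simp only [if_pos h]
        exact pointwise_coarea F' g t ht0 hmin hzF' p.1 p.2
      · simp [if_neg h]
    -- boundary witnesses
    set B := bdryF G F' with hBdef
    have hwit : ∃ w : V → V, ∀ i ∈ B, w i ∉ F' ∧ G.Adj i (w i) := by
      choose f hf using fun i : {x // x ∈ B} => (Finset.mem_filter.mp i.2).2
      exact ⟨fun i => if h : i ∈ B then f ⟨i, h⟩ else i,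
        fun i hi => by simpa [dif_pos hi] using hf ⟨i, hi⟩⟩
    obtain ⟨w, hw1⟩ := hwit
    have hBF' : B ⊆ F' := Finset.filter_subset _ _
    set S₀ := B.image (fun i => (i, w i)) ∪ B.image (fun i => (w i, i)) with hS₀
    have hsub : S₀ ⊆ D := by
      intro p hp
      rw [hS₀, Finset.mem_union] at hp
      rcases hp with hp | hp <;> obtain ⟨i, hi, rfl⟩ := Finset.mem_image.mp hp <;>
        rw [hDdef, Finset.mem_product]
      · exact ⟨subset_bigT G hfin F (hF'sub (hBF' hi)),
          mem_bigT_of_adj G hfin (hF'sub (hBF' hi)) (hw1 i hi).2⟩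
      · exact ⟨mem_bigT_of_adj G hfin (hF'sub (hBF' hi)) (hw1 i hi).2,
          subset_bigT G hfin F (hF'sub (hBF' hi))⟩
    have hval : ∀ p ∈ S₀, (if G.Adj p.1 p.2 then |χ p.1 - χ p.2| else 0) = 1 := by
      intro p hp
      rw [hS₀, Finset.mem_union] at hp
      rcases hp with hp | hp <;> obtain ⟨i, hi, rfl⟩ := Finset.mem_image.mp hp
      · rw [if_pos (hw1 i hi).2]
        simp [hχ1 i (hBF' hi), hχ0 _ (hw1 i hi).1]
      · rw [if_pos (hw1 i hi).2.symm]
        simp [hχ1 i (hBF' hi), hχ0 _ (hw1 i hi).1]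
    have hS₀card : S₀.card = 2 * B.card := by
      rw [hS₀, Finset.card_union_of_disjoint, Finset.card_image_of_injOn,
        Finset.card_image_of_injOn]
      · ring
      · intro a _ b _ h
        exact congrArg Prod.snd h
      · intro a _ b _ h
        exact congrArg Prod.fst h
      · rw [Finset.disjoint_left]
        rintro p hp1 hp2
        obtain ⟨i, hi, rfl⟩ := Finset.mem_image.mp hp1
        obtain ⟨j, hj, hpe⟩ := Finset.mem_image.mp hp2
        have h1 : i ∈ F' := hBF' hi
        have h2 : w j ∉ F' := (hw1 j hj).1
        have h3 : w j = i := congrArg Prod.fst hpe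
        exact h2 (h3 ▸ h1)
    have hSχB : 2 * (B.card : ℝ) ≤ Sχ := by
      have h1 : ∑ p ∈ S₀, (if G.Adj p.1 p.2 then |χ p.1 - χ p.2| else 0) = 2 * (B.card : ℝ) := by
        rw [Finset.sum_congr rfl hval, Finset.sum_const, hS₀card]
        push_cast; ring
      rw [← h1, hSχ]
      apply Finset.sum_le_sum_of_subset_of_nonneg hsub
      intro p _ _
      positivity
    -- sum decomposition
    have hsum1 : ∑ i ∈ F, g i = ∑ i ∈ F', g i := by
      rw [hF'def]
      exact (Finset.sum_filter_ne_zero F).symm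
    have hsum2 : ∑ i ∈ F', g i = t * F'.card + ∑ i ∈ F'.erase i₀, g' i := by
      have e1 : ∀ i ∈ F', g i = t + g' i := by
        intro i hi
        simp only [hg'def, hχ1 i hi, mul_one]
        ring
      rw [Finset.sum_congr rfl e1, Finset.sum_add_distrib, Finset.sum_const,
        Finset.sum_erase _ hg'i₀]
      push_cast; ring
    -- IH
    have hcard' : (F'.erase i₀).card ≤ n := by
      have h1 : F'.card ≤ n + 1 := le_trans (Finset.card_le_card hF'sub) hcard
      have h2 := Finset.card_erase_of_mem hi₀
      have h3 := Finset.card_pos.mpr hne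
      omega
    have hIH := ih (F'.erase i₀) g' hcard' hg'0 hg'z
    rw [convg'] at hIH
    have hchB := cheeger_mul_card_le G F' hne
    rw [← hBdef] at hchB
    -- conclude
    rw [convg, hsum1, hsum2, hsplit]
    have hch0 := cheeger_nonneg G
    have k1 : t * (cheegerConst G * F'.card) ≤ t * B.card :=
      mul_le_mul_of_nonneg_left hchB ht0.le
    have k2 : t * (2 * (B.card : ℝ)) ≤ t * Sχ :=
      mul_le_mul_of_nonneg_left hSχB ht0.le
    nlinarith [k1, k2, hIH]


lemma energy_nonneg (f : V → ℝ) : 0 ≤ edgeEnergy G f := by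
  rw [edgeEnergy]
  apply mul_nonneg (by norm_num)
  exact tsum_nonneg fun p => by positivity

lemma normSq_nonneg (f : V → ℝ) : 0 ≤ vertexNormSq f :=
  tsum_nonneg fun i => sq_nonneg _

lemma count_bound (v : ℕ) (hdegc : ∀ x : V, ((hfin x).toFinset).card = v)
    (T : Finset V) (x : V) : ((T.filter (G.Adj x)).card : ℝ) ≤ v := by
  have h1 : T.filter (G.Adj x) ⊆ (hfin x).toFinset := by
    intro y hy
    exact (hfin x).mem_toFinset.mpr (Finset.mem_filter.mp hy).2
  have h2 := Finset.card_le_card h1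
  rw [hdegc x] at h2
  exact_mod_cast h2

lemma cheeger_sq_bound (v : ℕ) (hdegc : ∀ x : V, ((hfin x).toFinset).card = v)
    (f : V → ℝ) (hf : (Function.support f).Finite) :
    cheegerConst G ^ 2 * vertexNormSq f ≤ 2 * v * edgeEnergy G f := by
  classical
  set F := hf.toFinset with hFdef
  have hfF : ∀ i ∉ F, f i = 0 := by
    intro i hi
    by_contra h
    exact hi (hf.mem_toFinset.mpr h)
  set T := bigT G hfin F with hTdef
  set D := T ×ˢ T with hDdef
  have hN : vertexNormSq f = ∑ i ∈ T, f i ^ 2 := by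
    rw [vertexNormSq]
    apply tsum_eq_sum
    intro i hi
    rw [hfF i (fun h => hi (subset_bigT G hfin F h))]
    ring
  have hNF : ∑ i ∈ F, f i ^ 2 = vertexNormSq f := by
    rw [hN]
    apply Finset.sum_subset (subset_bigT G hfin F)
    intro i _ hi
    rw [hfF i hi]
    ring
  have hE : edgeEnergy G f
      = (1/2) * ∑ p ∈ D, (if G.Adj p.1 p.2 then (f p.1 - f p.2)^2 else 0) := by
    rw [edgeEnergy, tsum_pair_eq G hfin F (fun a b => (a-b)^2) (by ring) f hfF]
  have hco := coarea G hfin F.card F (fun i => f i ^ 2) le_rfl (fun i => sq_nonneg _)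
      (fun i hi => by show f i ^ 2 = 0; rw [hfF i hi]; ring)
  rw [tsum_pair_eq G hfin F (fun a b => |a - b|) (by simp) (fun i => f i ^ 2)
      (fun i hi => by show f i ^ 2 = 0; rw [hfF i hi]; ring)] at hco
  beta_reduce at hco
  rw [hNF] at hco
  set a : V × V → ℝ := fun p => if G.Adj p.1 p.2 then |f p.1 - f p.2| else 0 with ha
  set b : V × V → ℝ := fun p => if G.Adj p.1 p.2 then |f p.1 + f p.2| else 0 with hb
  have hab : ∑ p ∈ D, (if G.Adj p.1 p.2 then |f p.1 ^ 2 - f p.2 ^ 2| else 0)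
      = ∑ p ∈ D, a p * b p := by
    apply Finset.sum_congr rfl
    intro p _
    by_cases h : G.Adj p.1 p.2
    · simp only [ha, hb, if_pos h, ← abs_mul]
      congr 1
      ring
    · simp [ha, hb, if_neg h]
  have hCS := Finset.sum_mul_sq_le_sq_mul_sq D a b
  have ha2 : ∑ p ∈ D, a p ^ 2 = 2 * edgeEnergy G f := by
    have e : ∀ p ∈ D, a p ^ 2 = (if G.Adj p.1 p.2 then (f p.1 - f p.2)^2 else 0) := by
      intro p _
      by_cases h : G.Adj p.1 p.2 <;> simp [ha, h, sq_abs]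
    rw [Finset.sum_congr rfl e, hE]
    ring
  have hP1 : ∑ p ∈ D, (if G.Adj p.1 p.2 then f p.1 ^ 2 else 0) ≤ v * vertexNormSq f := by
    rw [hDdef, Finset.sum_product, hN, Finset.mul_sum]
    apply Finset.sum_le_sum
    intro x _
    have e1 : ∑ y ∈ T, (if G.Adj x y then f x ^ 2 else 0)
        = ((T.filter (G.Adj x)).card : ℝ) * f x ^ 2 := by
      rw [← Finset.sum_filter]
      simp [Finset.sum_const, mul_comm]
    rw [e1]
    exact mul_le_mul_of_nonneg_right (count_bound G hfin v hdegc T x) (sq_nonneg _)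
  have hP2 : ∑ p ∈ D, (if G.Adj p.1 p.2 then f p.2 ^ 2 else 0) ≤ v * vertexNormSq f := by
    rw [hDdef, Finset.sum_product, Finset.sum_comm, hN, Finset.mul_sum]
    apply Finset.sum_le_sum
    intro y _
    have e1 : ∑ x ∈ T, (if G.Adj x y then f y ^ 2 else 0)
        = ((T.filter (G.Adj y)).card : ℝ) * f y ^ 2 := by
      have : ∀ x ∈ T, (if G.Adj x y then f y ^ 2 else 0) = (if G.Adj y x then f y ^ 2 else 0) := by
        intro x _
        rw [G.adj_comm]
      rw [Finset.sum_congr rfl this, ← Finset.sum_filter]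
      simp [Finset.sum_const, mul_comm]
    rw [e1]
    exact mul_le_mul_of_nonneg_right (count_bound G hfin v hdegc T y) (sq_nonneg _)
  have hb2 : ∑ p ∈ D, b p ^ 2 ≤ 4 * v * vertexNormSq f := by
    have hle : ∀ p ∈ D, b p ^ 2 ≤ 2 * (if G.Adj p.1 p.2 then f p.1 ^ 2 else 0)
        + 2 * (if G.Adj p.1 p.2 then f p.2 ^ 2 else 0) := by
      intro p _
      by_cases h : G.Adj p.1 p.2
      · simp only [hb, if_pos h, sq_abs]
        nlinarith [sq_nonneg (f p.1 - f p.2)]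
      · simp [hb, if_neg h]
    calc ∑ p ∈ D, b p ^ 2
        ≤ ∑ p ∈ D, (2 * (if G.Adj p.1 p.2 then f p.1 ^ 2 else 0)
            + 2 * (if G.Adj p.1 p.2 then f p.2 ^ 2 else 0)) := Finset.sum_le_sum hle
      _ = 2 * (∑ p ∈ D, (if G.Adj p.1 p.2 then f p.1 ^ 2 else 0))
            + 2 * (∑ p ∈ D, (if G.Adj p.1 p.2 then f p.2 ^ 2 else 0)) := by
          rw [Finset.sum_add_distrib, Finset.mul_sum, Finset.mul_sum]
      _ ≤ 4 * v * vertexNormSq f := by linarith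
  -- combine
  have hEnn := energy_nonneg G f
  have hNnn := normSq_nonneg f
  have hch := cheeger_nonneg G
  have key : (cheegerConst G * vertexNormSq f) ^ 2
      ≤ 2 * v * edgeEnergy G f * vertexNormSq f := by
    have h1 : cheegerConst G * vertexNormSq f ≤ (1/2) * ∑ p ∈ D, a p * b p := by
      rw [← hab]; exact hco
    have h2 : (0:ℝ) ≤ cheegerConst G * vertexNormSq f := mul_nonneg hch hNnn
    have h3 : (cheegerConst G * vertexNormSq f) ^ 2 ≤ ((1/2) * ∑ p ∈ D, a p * b p) ^ 2 := by
      apply sq_le_sq' <;> nlinarith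
    have h4 : ((1/2) * ∑ p ∈ D, a p * b p) ^ 2 = (1/4) * (∑ p ∈ D, a p * b p) ^ 2 := by ring
    have h5 : (∑ p ∈ D, a p * b p) ^ 2 ≤ (2 * edgeEnergy G f) * (4 * v * vertexNormSq f) := by
      calc (∑ p ∈ D, a p * b p) ^ 2 ≤ (∑ p ∈ D, a p ^ 2) * (∑ p ∈ D, b p ^ 2) := hCS
        _ ≤ (2 * edgeEnergy G f) * (4 * v * vertexNormSq f) := by
            rw [ha2]
            apply mul_le_mul_of_nonneg_left hb2
            linarith
    nlinarith
  by_cases hN0 : vertexNormSq f = 0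
  · rw [hN0, mul_zero]
    positivity
  · have hNpos : 0 < vertexNormSq f := lt_of_le_of_ne hNnn (Ne.symm hN0)
    have : cheegerConst G ^ 2 * vertexNormSq f * vertexNormSq f
        ≤ 2 * v * edgeEnergy G f * vertexNormSq f := by nlinarith
    exact le_of_mul_le_mul_right this hNpos

lemma indicator_norm (F : Finset V) :
    vertexNormSq (fun i => if i ∈ F then (1:ℝ) else 0) = F.card := by
  classical
  rw [vertexNormSq]
  rw [tsum_eq_sum (s := F) (by intro i hi; simp [hi])]
  simp

lemma indicator_energy_le (v : ℕ) (hdegc : ∀ x : V, ((hfin x).toFinset).card = v)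
    (F : Finset V) :
    edgeEnergy G (fun i => if i ∈ F then (1:ℝ) else 0) ≤ v * (bdryF G F).card := by
  classical
  set f : V → ℝ := fun i => if i ∈ F then (1:ℝ) else 0 with hfdef
  have hfF : ∀ i ∉ F, f i = 0 := by intro i hi; simp [hfdef, hi]
  set T := bigT G hfin F with hTdef
  set D := T ×ˢ T with hDdef
  set Bd := bdryF G F with hBd
  have hBdT : Bd ⊆ T := fun i hi => subset_bigT G hfin F (Finset.filter_subset _ _ hi)
  have hE : edgeEnergy G f
      = (1/2) * ∑ p ∈ D, (if G.Adj p.1 p.2 then (f p.1 - f p.2)^2 else 0) := by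
    rw [edgeEnergy, tsum_pair_eq G hfin F (fun a b => (a-b)^2) (by ring) f hfF]
  have termbd : ∀ p ∈ D, (if G.Adj p.1 p.2 then (f p.1 - f p.2)^2 else 0)
      ≤ (if G.Adj p.1 p.2 ∧ p.1 ∈ Bd then (1:ℝ) else 0)
        + (if G.Adj p.1 p.2 ∧ p.2 ∈ Bd then (1:ℝ) else 0) := by
    intro p _
    by_cases h : G.Adj p.1 p.2
    · by_cases h1 : p.1 ∈ F <;> by_cases h2 : p.2 ∈ F
      · simp only [hfdef, if_pos h, if_pos h1, if_pos h2, sub_self]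
        split_ifs <;> norm_num
      · have hb1 : p.1 ∈ Bd := mem_bdryF G h1 h2 h
        simp only [hfdef, if_pos h, if_pos h1, if_neg h2, if_pos (And.intro h hb1)]
        have : (0:ℝ) ≤ if G.Adj p.1 p.2 ∧ p.2 ∈ Bd then (1:ℝ) else 0 := by positivity
        nlinarith
      · have hb2 : p.2 ∈ Bd := mem_bdryF G h2 h1 h.symm
        simp only [hfdef, if_pos h, if_neg h1, if_pos h2, if_pos (And.intro h hb2)]
        have : (0:ℝ) ≤ if G.Adj p.1 p.2 ∧ p.1 ∈ Bd then (1:ℝ) else 0 := by positivity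
        nlinarith
      · simp only [hfdef, if_pos h, if_neg h1, if_neg h2, sub_self]
        split_ifs <;> norm_num
    · simp only [if_neg h, if_neg (fun hc : _ ∧ _ => h hc.1)]
      norm_num
  have hcount1 : ∑ p ∈ D, (if G.Adj p.1 p.2 ∧ p.1 ∈ Bd then (1:ℝ) else 0)
      ≤ v * Bd.card := by
    rw [hDdef, Finset.sum_product]
    have inner : ∀ x ∈ T, ∑ y ∈ T, (if G.Adj x y ∧ x ∈ Bd then (1:ℝ) else 0)
        ≤ if x ∈ Bd then (v:ℝ) else 0 := by
      intro x _
      by_cases hx : x ∈ Bd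
      · rw [if_pos hx]
        have e1 : ∑ y ∈ T, (if G.Adj x y ∧ x ∈ Bd then (1:ℝ) else 0)
            = ((T.filter (G.Adj x)).card : ℝ) := by
          rw [← Finset.sum_filter (fun y => G.Adj x y ∧ x ∈ Bd)]
          have : T.filter (fun y => G.Adj x y ∧ x ∈ Bd) = T.filter (G.Adj x) := by
            apply Finset.filter_congr
            intro y _
            simp [hx]
          rw [this]
          simp
        rw [e1]
        exact count_bound G hfin v hdegc T x
      · have e1 : ∀ y ∈ T, (if G.Adj x y ∧ x ∈ Bd then (1:ℝ) else 0) = 0 := by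
          intro y _
          rw [if_neg (fun hc => hx hc.2)]
        rw [Finset.sum_congr rfl e1, if_neg hx]
        simp
    calc ∑ x ∈ T, ∑ y ∈ T, (if G.Adj x y ∧ x ∈ Bd then (1:ℝ) else 0)
        ≤ ∑ x ∈ T, (if x ∈ Bd then (v:ℝ) else 0) := Finset.sum_le_sum inner
      _ = v * Bd.card := by
          rw [← Finset.sum_filter (fun x => x ∈ Bd), Finset.filter_mem_eq_inter,
            Finset.inter_eq_right.mpr hBdT]
          simp [mul_comm]
  have hcount2 : ∑ p ∈ D, (if G.Adj p.1 p.2 ∧ p.2 ∈ Bd then (1:ℝ) else 0)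
      ≤ v * Bd.card := by
    rw [hDdef, Finset.sum_product, Finset.sum_comm]
    have inner : ∀ y ∈ T, ∑ x ∈ T, (if G.Adj x y ∧ y ∈ Bd then (1:ℝ) else 0)
        ≤ if y ∈ Bd then (v:ℝ) else 0 := by
      intro y _
      by_cases hy : y ∈ Bd
      · rw [if_pos hy]
        have e1 : ∑ x ∈ T, (if G.Adj x y ∧ y ∈ Bd then (1:ℝ) else 0)
            = ((T.filter (G.Adj y)).card : ℝ) := by
          rw [← Finset.sum_filter (fun x => G.Adj x y ∧ y ∈ Bd)]
          have : T.filter (fun x => G.Adj x y ∧ y ∈ Bd) = T.filter (G.Adj y) := by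
            apply Finset.filter_congr
            intro x _
            rw [G.adj_comm]
            simp [hy]
          rw [this]
          simp
        rw [e1]
        exact count_bound G hfin v hdegc T y
      · have e1 : ∀ x ∈ T, (if G.Adj x y ∧ y ∈ Bd then (1:ℝ) else 0) = 0 := by
          intro x _
          rw [if_neg (fun hc => hy hc.2)]
        rw [Finset.sum_congr rfl e1, if_neg hy]
        simp
    calc ∑ y ∈ T, ∑ x ∈ T, (if G.Adj x y ∧ y ∈ Bd then (1:ℝ) else 0)
        ≤ ∑ y ∈ T, (if y ∈ Bd then (v:ℝ) else 0) := Finset.sum_le_sum inner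
      _ = v * Bd.card := by
          rw [← Finset.sum_filter (fun y => y ∈ Bd), Finset.filter_mem_eq_inter,
            Finset.inter_eq_right.mpr hBdT]
          simp [mul_comm]
  have hsum : ∑ p ∈ D, (if G.Adj p.1 p.2 then (f p.1 - f p.2)^2 else 0)
      ≤ 2 * (v * Bd.card) := by
    calc ∑ p ∈ D, (if G.Adj p.1 p.2 then (f p.1 - f p.2)^2 else 0)
        ≤ ∑ p ∈ D, ((if G.Adj p.1 p.2 ∧ p.1 ∈ Bd then (1:ℝ) else 0)
            + (if G.Adj p.1 p.2 ∧ p.2 ∈ Bd then (1:ℝ) else 0)) := Finset.sum_le_sum termbd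
      _ = (∑ p ∈ D, (if G.Adj p.1 p.2 ∧ p.1 ∈ Bd then (1:ℝ) else 0))
            + (∑ p ∈ D, (if G.Adj p.1 p.2 ∧ p.2 ∈ Bd then (1:ℝ) else 0)) :=
          Finset.sum_add_distrib
      _ ≤ 2 * (v * Bd.card) := by linarith
  rw [hE]
  linarith

end Aux

theorem amenable_iff_mu0_eq_zero (V : Type) [Countable V] [Infinite V]
    (G : SimpleGraph V) (hconn : G.Connected) (v : ℕ) (hv : 2 ≤ v)
    (hdeg : ∀ x : V, (G.neighborSet x).ncard = v) :
    cheegerConst G = 0 ↔ mu0 G = 0 := by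
  classical
  have hfin : ∀ x : V, (G.neighborSet x).Finite := by
    intro x
    by_contra h
    have h0 : (G.neighborSet x).ncard = 0 := Set.Infinite.ncard h
    rw [hdeg x] at h0
    omega
  have hdegc : ∀ x : V, ((hfin x).toFinset).card = v := by
    intro x
    rw [← Set.ncard_eq_toFinset_card (G.neighborSet x) (hfin x)]
    exact hdeg x
  have hvpos : (0:ℝ) < v := by
    have : (2:ℝ) ≤ v := by exact_mod_cast hv
    linarith
  obtain ⟨x₀⟩ : Nonempty V := inferInstance
  -- the mu0 defining set
  set S : Set ℝ := {r : ℝ | ∃ f : V → ℝ, (Function.support f).Finite ∧ f ≠ 0 ∧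
    r = edgeEnergy G f / vertexNormSq f} with hS
  have hmu0 : mu0 G = sInf S := rfl
  have hSbdd : BddBelow S := by
    refine ⟨0, ?_⟩
    rintro r ⟨f, hf, hfne, rfl⟩
    exact div_nonneg (energy_nonneg G f) (normSq_nonneg f)
  have hSne : S.Nonempty := by
    refine ⟨_, fun i => if i ∈ ({x₀} : Finset V) then (1:ℝ) else 0, ?_, ?_, rfl⟩
    · apply Set.Finite.subset (Set.finite_singleton x₀)
      intro i hi
      rw [Function.mem_support] at hi
      by_contra h
      simp only [Set.mem_singleton_iff] at h
      exact hi (by simp [h])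
    · intro h
      have := congrFun h x₀
      simp at this
  constructor
  · -- cheegerConst = 0 → mu0 = 0
    intro hch
    have hmu0nn : 0 ≤ mu0 G := by
      rw [hmu0]
      apply Real.sInf_nonneg
      rintro r ⟨f, hf, hfne, rfl⟩
      exact div_nonneg (energy_nonneg G f) (normSq_nonneg f)
    have hle : ∀ ε : ℝ, 0 < ε → mu0 G ≤ 0 + ε := by
      intro ε hε
      set δ := ε / (v + 1) with hδ
      have hδpos : 0 < δ := by positivity
      -- cheeger set
      have hCne : {r : ℝ | ∃ F : Finset V, F.Nonempty ∧
          r = (innerBoundary G (F : Set V)).ncard / F.card}.Nonempty :=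
        ⟨_, {x₀}, Finset.singleton_nonempty x₀, rfl⟩
      have hlt : sInf {r : ℝ | ∃ F : Finset V, F.Nonempty ∧
          r = (innerBoundary G (F : Set V)).ncard / F.card} < δ := by
        rw [show sInf _ = cheegerConst G from rfl, hch]
        exact hδpos
      obtain ⟨r, hrS, hrδ⟩ := exists_lt_of_csInf_lt hCne hlt
      obtain ⟨F, hFne, rfl⟩ := hrS
      have hFpos : (0:ℝ) < F.card := by exact_mod_cast hFne.card_pos
      set f : V → ℝ := fun i => if i ∈ F then (1:ℝ) else 0 with hfdef
      have hmem : edgeEnergy G f / vertexNormSq f ∈ S := by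
        refine ⟨f, ?_, ?_, rfl⟩
        · apply Set.Finite.subset F.finite_toSet
          intro i hi
          rw [Function.mem_support] at hi
          by_contra h
          have h' : i ∉ F := by simpa using h
          exact hi (by simp [hfdef, h'])
        · intro h
          obtain ⟨x, hx⟩ := hFne
          have := congrFun h x
          simp [hfdef, hx] at this
      have h1 : mu0 G ≤ edgeEnergy G f / vertexNormSq f := csInf_le hSbdd hmem
      have hNval : vertexNormSq f = F.card := indicator_norm F
      have hEle : edgeEnergy G f ≤ v * (bdryF G F).card :=
        indicator_energy_le G hfin v hdegc F
      have h2 : edgeEnergy G f / vertexNormSq f ≤ (v * (bdryF G F).card) / F.card := by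
        rw [hNval]
        exact div_le_div_of_nonneg_right hEle hFpos.le
      have h3 : (v * ((bdryF G F).card : ℝ)) / F.card
          = v * (((innerBoundary G (F : Set V)).ncard : ℝ) / F.card) := by
        rw [bdry_ncard, mul_div_assoc]
      have h4 : (v:ℝ) * (((innerBoundary G (F : Set V)).ncard : ℝ) / F.card) ≤ v * δ :=
        mul_le_mul_of_nonneg_left hrδ.le hvpos.le
      have h5 : (v:ℝ) * δ ≤ ε := by
        have hv1 : (0:ℝ) < (v:ℝ) + 1 := by positivity
        rw [hδ, mul_div_assoc', div_le_iff₀ hv1]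
        nlinarith
      linarith
    have := le_of_forall_pos_le_add hle
    linarith
  · -- mu0 = 0 → cheegerConst = 0
    intro hmu
    have key : ∀ r ∈ S, cheegerConst G ^ 2 / (2 * v) ≤ r := by
      rintro r ⟨f, hf, hfne, rfl⟩
      have hb := cheeger_sq_bound G hfin v hdegc f hf
      have hNpos : 0 < vertexNormSq f := by
        obtain ⟨i₁, hi₁⟩ := Function.ne_iff.mp hfne
        have hmemF : i₁ ∈ hf.toFinset := hf.mem_toFinset.mpr hi₁
        have hNsum : vertexNormSq f = ∑ i ∈ hf.toFinset, f i ^ 2 := by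
          rw [vertexNormSq]
          apply tsum_eq_sum
          intro i hi
          have : f i = 0 := by
            by_contra h
            exact hi (hf.mem_toFinset.mpr h)
          rw [this]
          ring
        rw [hNsum]
        have h1 : 0 < f i₁ ^ 2 := lt_of_le_of_ne (sq_nonneg _) (Ne.symm (pow_ne_zero 2 hi₁))
        have h2 : f i₁ ^ 2 ≤ ∑ i ∈ hf.toFinset, f i ^ 2 :=
          Finset.single_le_sum (fun i _ => sq_nonneg (f i)) hmemF
        linarith
      rw [div_le_div_iff₀ (by positivity) hNpos]
      linarith
    have h1 : cheegerConst G ^ 2 / (2 * v) ≤ mu0 G := le_csInf hSne key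
    rw [hmu] at h1
    have h2 : cheegerConst G ^ 2 ≤ 0 := by
      by_contra h
      push_neg at h
      have : 0 < cheegerConst G ^ 2 / (2 * v) := by positivity
      linarith
    have h3 := cheeger_nonneg G
    nlinarith
end

section
/- Let R > 0 and let P, Q be real numbers. Define F₀(r) = P − (P − Q)·arcsin(tanh r)/arcsin(tanh R). Then F₀(0) = P, F₀(R) = Q, F₀ satisfies F₀''(r) + tanh(r)·F₀'(r) = 0 for every real r, and ∫₀^R F₀'(r)² cosh(r) dr = (P − Q)²·(2·arctan(e^R) − π/2)/arcsin(tanh R)². -/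
lemma tanh_sq_lt_one (x : ℝ) : Real.tanh x ^ 2 < 1 := by
  have h := Real.cosh_pos x
  rw [Real.tanh_eq_sinh_div_cosh, div_pow, div_lt_one (by positivity)]
  try nlinarith [Real.cosh_sq x]

lemma one_sub_tanh_sq (x : ℝ) : 1 - Real.tanh x ^ 2 = 1 / Real.cosh x ^ 2 := by
  have h := Real.cosh_pos x
  rw [Real.tanh_eq_sinh_div_cosh, div_pow]
  field_simp
  linarith [Real.cosh_sq x]

lemma hasDerivAt_arcsin_tanh (x : ℝ) :
    HasDerivAt (fun r => Real.arcsin (Real.tanh r)) (1 / Real.cosh x) x := by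
  have h1 : Real.tanh x ≠ -1 := by nlinarith [tanh_sq_lt_one x]
  have h2 : Real.tanh x ≠ 1 := by nlinarith [tanh_sq_lt_one x]
  have hc := Real.cosh_pos x
  have htanh : HasDerivAt Real.tanh (1 / Real.cosh x ^ 2) x := by
    have h := (Real.hasDerivAt_sinh x).div (Real.hasDerivAt_cosh x) (ne_of_gt hc)
    refine (h.congr_deriv ?_).congr_of_eventuallyEq ?_
    · field_simp
      nlinarith [Real.cosh_sq x]
    · exact Filter.Eventually.of_forall fun r => Real.tanh_eq_sinh_div_cosh r
  have h := (Real.hasDerivAt_arcsin h1 h2).comp x htanh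
  refine h.congr_deriv ?_
  rw [one_sub_tanh_sq, one_div (Real.cosh x ^ 2), Real.sqrt_inv, Real.sqrt_sq hc.le]
  field_simp


lemma sech_antideriv (x : ℝ) :
    2 * (1 / (1 + Real.exp x ^ 2) * Real.exp x) = 1 / Real.cosh x := by
  have he := Real.exp_ne_zero x
  rw [Real.cosh_eq, Real.exp_neg]
  field_simp
  ring

/-- The harmonic interpolant `F₀(r) = P - (P - Q) · arcsin (tanh r) / arcsin (tanh R)`
in Fermi coordinates: it takes the values `P` at `0` and `Q` at `R`, satisfies the
radial harmonic equation `F₀'' + tanh · F₀' = 0`, and its weighted radial Dirichlet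
energy equals `(P - Q)² (2 arctan (e^R) - π/2) / arcsin (tanh R)²`. -/
theorem harmonic_interpolant_energy (R P Q : ℝ) (hR : 0 < R) :
    let F₀ : ℝ → ℝ := fun r =>
      P - (P - Q) * Real.arcsin (Real.tanh r) / Real.arcsin (Real.tanh R)
    F₀ 0 = P ∧ F₀ R = Q ∧
    (∀ r : ℝ, deriv (deriv F₀) r + Real.tanh r * deriv F₀ r = 0) ∧
    (∫ r in (0:ℝ)..R, (deriv F₀ r) ^ 2 * Real.cosh r)
      = (P - Q) ^ 2 * (2 * Real.arctan (Real.exp R) - Real.pi / 2)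
          / (Real.arcsin (Real.tanh R)) ^ 2 := by
  intro F₀
  set A := Real.arcsin (Real.tanh R) with hAdef
  have htR : 0 < Real.tanh R := by
    rw [Real.tanh_eq_sinh_div_cosh]
    exact div_pos (Real.sinh_pos_iff.mpr hR) (Real.cosh_pos R)
  have hA : 0 < A := Real.arcsin_pos.mpr htR
  set c : ℝ := (P - Q) / A with hcdef
  have hF0 : F₀ = fun r => P - c * Real.arcsin (Real.tanh r) := by
    funext r; simp only [F₀, hcdef]; ring
  have hF' : ∀ r : ℝ, HasDerivAt F₀ (-(c / Real.cosh r)) r := by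
    intro r
    rw [hF0]
    have h := ((hasDerivAt_arcsin_tanh r).const_mul c).const_sub P
    refine h.congr_deriv ?_
    field_simp
  have hderiv : deriv F₀ = fun r => -(c / Real.cosh r) :=
    funext fun r => (hF' r).deriv
  have hcont : Continuous (deriv F₀) := by
    rw [hderiv]
    exact (continuous_const.div Real.continuous_cosh
      fun x => (Real.cosh_pos x).ne').neg
  refine ⟨?_, ?_, ?_, ?_⟩
  · simp [F₀]
  · simp only [F₀]
    rw [mul_div_assoc, ← hAdef, div_self hA.ne', mul_one]; ring
  · intro r
    have hF'' : HasDerivAt (deriv F₀) (c * Real.sinh r / Real.cosh r ^ 2) r := by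
      rw [hderiv]
      have h := ((hasDerivAt_const r c).div (Real.hasDerivAt_cosh r)
        (Real.cosh_pos r).ne').neg
      refine h.congr_deriv ?_
      field_simp
      ring
    rw [hF''.deriv, hderiv]
    have hc := (Real.cosh_pos r).ne'
    rw [Real.tanh_eq_sinh_div_cosh]
    field_simp
    ring
  · have key : ∀ x ∈ Set.uIcc (0:ℝ) R,
        HasDerivAt (fun r => c ^ 2 * (2 * Real.arctan (Real.exp r)))
          ((deriv F₀ x) ^ 2 * Real.cosh x) x := by
      intro x _
      have h0 : HasDerivAt (fun r => Real.arctan (Real.exp r))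
          (1 / (1 + Real.exp x ^ 2) * Real.exp x) x :=
        (Real.hasDerivAt_arctan (Real.exp x)).comp x (Real.hasDerivAt_exp x)
      have h := (h0.const_mul 2).const_mul (c ^ 2)
      rw [sech_antideriv] at h
      refine h.congr_deriv ?_
      rw [hderiv]
      have hc := (Real.cosh_pos x).ne'
      field_simp
    have hint : IntervalIntegrable (fun r => (deriv F₀ r) ^ 2 * Real.cosh r)
        MeasureTheory.volume 0 R :=
      ((hcont.pow 2).mul Real.continuous_cosh).intervalIntegrable 0 R
    rw [intervalIntegral.integral_eq_sub_of_hasDerivAt key hint]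
    rw [Real.exp_zero, Real.arctan_one, hcdef]
    field_simp
    ring
end

section
/- Let R > 0 and let P, Q be real numbers. For every function g : ℝ → ℝ that is continuously differentiable on [0, R] with g(0) = P and g(R) = Q, one has ∫₀^R g'(r)² cosh(r) dr ≥ (P − Q)²/(2·arctan(e^R) − π/2). -/
open Real intervalIntegral

lemma sech_antideriv_s7 (r : ℝ) :
    HasDerivAt (fun x => 2 * Real.arctan (Real.exp x)) (Real.cosh r)⁻¹ r := by
  have h1 : HasDerivAt (fun x => Real.arctan (Real.exp x))
      (1 / (1 + (Real.exp r) ^ 2) * Real.exp r) r :=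
    (Real.hasDerivAt_arctan (Real.exp r)).comp r (Real.hasDerivAt_exp r)
  have h2 := h1.const_mul 2
  refine h2.congr_deriv ?_
  have he : Real.cosh r = (Real.exp r + Real.exp (-r)) / 2 := Real.cosh_eq r
  rw [he, Real.exp_neg]
  have hx : Real.exp r > 0 := Real.exp_pos r
  field_simp
  ring

lemma sech_integral (R : ℝ) (hR : 0 ≤ R) :
    ∫ r in (0:ℝ)..R, (Real.cosh r)⁻¹
      = 2 * Real.arctan (Real.exp R) - Real.pi / 2 := by
  have h := intervalIntegral.integral_eq_sub_of_hasDerivAt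
    (f := fun x => 2 * Real.arctan (Real.exp x)) (f' := fun r => (Real.cosh r)⁻¹)
    (fun x _ => sech_antideriv_s7 x)
    ((Real.continuous_cosh.inv₀ (fun x => (Real.cosh_pos x).ne')).intervalIntegrable 0 R)
  simp only [h, Real.exp_zero, Real.arctan_one]
  ring

/-- Lower bound for the weighted radial Dirichlet energy of a continuously
differentiable function on `[0, R]` with boundary values `P` and `Q`:
`∫₀^R g'(r)² cosh r dr ≥ (P - Q)² / (2 arctan (e^R) - π/2)`. -/
theorem radial_energy_lower_bound (R P Q : ℝ) (hR : 0 < R) (g g' : ℝ → ℝ)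
    (hg : ∀ r ∈ Set.Icc (0:ℝ) R, HasDerivAt g (g' r) r)
    (hg' : ContinuousOn g' (Set.Icc 0 R))
    (h0 : g 0 = P) (hRQ : g R = Q) :
    (P - Q) ^ 2 / (2 * Real.arctan (Real.exp R) - Real.pi / 2) ≤
      ∫ r in (0:ℝ)..R, (g' r) ^ 2 * Real.cosh r := by
  set I : ℝ := 2 * Real.arctan (Real.exp R) - Real.pi / 2 with hIdef
  have hRle : (0:ℝ) ≤ R := hR.le
  have hIpos : 0 < I := by
    have h1 : Real.arctan 1 < Real.arctan (Real.exp R) :=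
      Real.arctan_strictMono (by linarith [Real.add_one_le_exp R])
    rw [Real.arctan_one] at h1
    simp only [hIdef]
    linarith
  have uicc : Set.uIcc (0:ℝ) R = Set.Icc 0 R := Set.uIcc_of_le hRle
  have hg'int : IntervalIntegrable g' MeasureTheory.volume 0 R := by
    apply ContinuousOn.intervalIntegrable; rwa [uicc]
  have hFTC : ∫ r in (0:ℝ)..R, g' r = Q - P := by
    rw [intervalIntegral.integral_eq_sub_of_hasDerivAt (fun x hx => hg x (uicc ▸ hx)) hg'int,
      h0, hRQ]
  have hsechint : IntervalIntegrable (fun r => (Real.cosh r)⁻¹) MeasureTheory.volume 0 R :=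
    (Real.continuous_cosh.inv₀ (fun x => (Real.cosh_pos x).ne')).intervalIntegrable 0 R
  have hEint : IntervalIntegrable (fun r => (g' r) ^ 2 * Real.cosh r)
      MeasureTheory.volume 0 R := by
    apply ContinuousOn.intervalIntegrable
    rw [uicc]
    exact ((hg'.pow 2).mul Real.continuous_cosh.continuousOn)
  set t : ℝ := (Q - P) / I with htdef
  have hpt : ∀ r ∈ Set.Icc (0:ℝ) R,
      2 * t * g' r - t ^ 2 * (Real.cosh r)⁻¹ ≤ (g' r) ^ 2 * Real.cosh r := by
    intro r _
    have hc : 0 < Real.cosh r := Real.cosh_pos r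
    have key : 0 ≤ (g' r * Real.cosh r - t) ^ 2 / Real.cosh r := by positivity
    have : (g' r * Real.cosh r - t) ^ 2 / Real.cosh r
        = (g' r) ^ 2 * Real.cosh r - 2 * t * g' r + t ^ 2 * (Real.cosh r)⁻¹ := by
      field_simp
      ring
    linarith [this ▸ key]
  have hLint : IntervalIntegrable (fun r => 2 * t * g' r - t ^ 2 * (Real.cosh r)⁻¹)
      MeasureTheory.volume 0 R :=
    ((hg'int.const_mul (2 * t)).sub (hsechint.const_mul (t ^ 2)))
  have hmono := intervalIntegral.integral_mono_on hRle hLint hEint hpt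
  have hLval : ∫ r in (0:ℝ)..R, (2 * t * g' r - t ^ 2 * (Real.cosh r)⁻¹)
      = 2 * t * (Q - P) - t ^ 2 * I := by
    rw [intervalIntegral.integral_sub (hg'int.const_mul (2 * t))
      (hsechint.const_mul (t ^ 2)), intervalIntegral.integral_const_mul,
      intervalIntegral.integral_const_mul, hFTC, sech_integral R hRle]
  rw [hLval] at hmono
  have hval : 2 * t * (Q - P) - t ^ 2 * I = (P - Q) ^ 2 / I := by
    rw [htdef]
    field_simp
    ring
  linarith [hval ▸ hmono]
end

section
/- For every m > 0 and every λ > 0 there exists a constant A > 0 with the following property. For all functions u : [0, m] × ℝ → ℝ and w : [−m, 0] × ℝ → ℝ that are continuously differentiable and 2π-periodic in the second variable, one has ∫₀^m ∫₀^{2π} (∂u/∂r)(r, θ)² cosh(r) dθ dr + ∫_{−m}^0 ∫₀^{2π} (∂w/∂r)(r, θ)² cosh(r) dθ dr + λ·(∫₀^m ∫₀^{2π} u(r, θ)² cosh(r) dθ dr + ∫_{−m}^0 ∫₀^{2π} w(r, θ)² cosh(r) dθ dr) ≥ A·(∫₀^{2π} (u(0, θ) − w(0, θ)) dθ)². -/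
section CollarHelpers
open MeasureTheory intervalIntegral Set

lemma sq_intervalIntegral_le {f : ℝ → ℝ} {a b : ℝ} (hab : a ≤ b)
    (hf : IntervalIntegrable f volume a b)
    (hf2 : IntervalIntegrable (fun x => f x ^ 2) volume a b) :
    (∫ x in a..b, f x) ^ 2 ≤ (b - a) * ∫ x in a..b, f x ^ 2 := by
  rcases eq_or_lt_of_le hab with h | h
  · subst h; simp
  · set I := ∫ x in a..b, f x with hI
    set S := ∫ x in a..b, f x ^ 2 with hS
    have hba : 0 < b - a := sub_pos.2 h
    set c := I / (b - a) with hc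
    have h0 : 0 ≤ ∫ x in a..b, (f x - c) ^ 2 :=
      intervalIntegral.integral_nonneg hab fun x _ => sq_nonneg _
    have hexp : ∫ x in a..b, (f x - c) ^ 2 = S - 2 * c * I + (b - a) * c ^ 2 := by
      have h1 : ∀ x, (f x - c) ^ 2 = (f x ^ 2 - 2 * c * f x) + c ^ 2 := fun x => by ring
      simp_rw [h1]
      rw [intervalIntegral.integral_add (hf2.sub (hf.const_mul (2 * c)))
            (intervalIntegrable_const),
          intervalIntegral.integral_sub hf2 (hf.const_mul (2 * c)),
          intervalIntegral.integral_const_mul, intervalIntegral.integral_const]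
      simp only [smul_eq_mul]; try ring
    rw [hexp] at h0
    have h1 : (b - a) * c = I := by rw [hc]; field_simp [hba.ne']
    nlinarith [mul_nonneg hba.le h0]

lemma collar_trace_left {a b : ℝ} (hab : a < b) (f f' : ℝ → ℝ)
    (hd : ∀ r ∈ Icc a b, HasDerivAt f (f' r) r)
    (hc : ContinuousOn f' (Icc a b)) :
    (b - a) * f a ^ 2 ≤
      2 * (∫ r in a..b, f r ^ 2) + 2 * (b - a) ^ 2 * ∫ r in a..b, f' r ^ 2 := by
  have hab' : a ≤ b := hab.le
  have hfc : ContinuousOn f (Icc a b) := fun x hx =>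
    ((hd x hx).continuousAt).continuousWithinAt
  have huIcc : uIcc a b = Icc a b := uIcc_of_le hab'
  have hintf' : IntervalIntegrable f' volume a b :=
    (hc.mono (by rw [huIcc])).intervalIntegrable
  have hintf'2 : IntervalIntegrable (fun x => f' x ^ 2) volume a b :=
    ((hc.pow 2).mono (by rw [huIcc])).intervalIntegrable
  have hintf2 : IntervalIntegrable (fun x => f x ^ 2) volume a b :=
    ((hfc.pow 2).mono (by rw [huIcc])).intervalIntegrable
  set E := ∫ r in a..b, f' r ^ 2 with hE
  have hE0 : 0 ≤ E := intervalIntegral.integral_nonneg hab' fun x _ => sq_nonneg _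
  -- pointwise estimate
  have hpt : ∀ r ∈ Icc a b, f a ^ 2 ≤ 2 * f r ^ 2 + 2 * ((b - a) * E) := by
    intro r hr
    have hra : a ≤ r := hr.1
    have hrb : r ≤ b := hr.2
    have hsub : Icc a r ⊆ Icc a b := Icc_subset_Icc le_rfl hrb
    have hftc : ∫ s in a..r, f' s = f r - f a := by
      apply intervalIntegral.integral_eq_sub_of_hasDerivAt
      · intro x hx
        rw [uIcc_of_le hra] at hx
        exact hd x (hsub hx)
      · exact hintf'.mono_set (by rw [uIcc_of_le hra, huIcc]; exact hsub)
    have hcs : (∫ s in a..r, f' s) ^ 2 ≤ (r - a) * ∫ s in a..r, f' s ^ 2 :=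
      sq_intervalIntegral_le hra
        (hintf'.mono_set (by rw [uIcc_of_le hra, huIcc]; exact hsub))
        (hintf'2.mono_set (by rw [uIcc_of_le hra, huIcc]; exact hsub))
    have hEr : ∫ s in a..r, f' s ^ 2 ≤ E := by
      apply intervalIntegral.integral_mono_interval le_rfl hra hrb
      · filter_upwards with x using sq_nonneg _
      · exact hintf'2
    have hEr0 : 0 ≤ ∫ s in a..r, f' s ^ 2 :=
      intervalIntegral.integral_nonneg hra fun x _ => sq_nonneg _
    have h1 : (∫ s in a..r, f' s) ^ 2 ≤ (b - a) * E := by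
      calc (∫ s in a..r, f' s) ^ 2 ≤ (r - a) * ∫ s in a..r, f' s ^ 2 := hcs
        _ ≤ (b - a) * E := by
            apply mul_le_mul (by linarith) hEr hEr0 (by linarith)
    have heq : f a = f r - ∫ s in a..r, f' s := by rw [hftc]; ring
    rw [heq]
    nlinarith [sq_nonneg (f r + ∫ s in a..r, f' s), h1]
  -- integrate over r
  have hmono := intervalIntegral.integral_mono_on hab'
    (_root_.intervalIntegrable_const (c := f a ^ 2))
    (((hintf2.const_mul 2).add (_root_.intervalIntegrable_const (c := 2 * ((b - a) * E)))))
    hpt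
  rw [intervalIntegral.integral_const, smul_eq_mul] at hmono
  rw [intervalIntegral.integral_add (hintf2.const_mul 2) intervalIntegrable_const,
    intervalIntegral.integral_const_mul, intervalIntegral.integral_const, smul_eq_mul] at hmono
  nlinarith [hmono]

lemma collar_trace_right {a b : ℝ} (hab : a < b) (f f' : ℝ → ℝ)
    (hd : ∀ r ∈ Icc a b, HasDerivAt f (f' r) r)
    (hc : ContinuousOn f' (Icc a b)) :
    (b - a) * f b ^ 2 ≤
      2 * (∫ r in a..b, f r ^ 2) + 2 * (b - a) ^ 2 * ∫ r in a..b, f' r ^ 2 := by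
  have hmem : ∀ r ∈ Icc a b, a + b - r ∈ Icc a b := by
    intro r hr; constructor <;> [linarith [hr.2]; linarith [hr.1]]
  have key := collar_trace_left hab (fun r => f (a + b - r))
      (fun r => -f' (a + b - r))
      (by
        intro r hr
        have h1 : HasDerivAt (fun s : ℝ => a + b - s) (-1) r := by
          simpa using (hasDerivAt_id r).const_sub (a + b)
        have h2 := (hd _ (hmem r hr)).comp r h1
        simpa [mul_comm, Function.comp_def] using h2)
      (by
        have hcont : Continuous fun r : ℝ => a + b - r := by continuity
        have : ContinuousOn (fun r => f' (a + b - r)) (Icc a b) :=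
          hc.comp hcont.continuousOn hmem
        exact this.neg)
  have e1 : ∫ r in a..b, f (a + b - r) ^ 2 = ∫ r in a..b, f r ^ 2 := by
    have := intervalIntegral.integral_comp_sub_left (a := a) (b := b)
      (fun x => f x ^ 2) (a + b)
    simpa using this
  have e2 : ∫ r in a..b, (-f' (a + b - r)) ^ 2 = ∫ r in a..b, f' r ^ 2 := by
    have h3 : ∀ r, (-f' (a + b - r)) ^ 2 = f' (a + b - r) ^ 2 := fun r => by ring
    simp_rw [h3]
    have := intervalIntegral.integral_comp_sub_left (a := a) (b := b)
      (fun x => f' x ^ 2) (a + b)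
    simpa using this
  have e3 : a + b - a = b := by ring
  rw [e1, e2] at key
  simpa [e3] using key

lemma collar_swap_integral {f : ℝ → ℝ → ℝ} (hf : Continuous (Function.uncurry f))
    {a b c d : ℝ} (hab : a ≤ b) (hcd : c ≤ d) :
    ∫ x in a..b, ∫ y in c..d, f x y = ∫ y in c..d, ∫ x in a..b, f x y := by
  rw [intervalIntegral.integral_of_le hab, intervalIntegral.integral_of_le hcd]
  simp_rw [intervalIntegral.integral_of_le hab, intervalIntegral.integral_of_le hcd]
  apply MeasureTheory.integral_integral_swap
  rw [MeasureTheory.Measure.prod_restrict, ← MeasureTheory.Measure.volume_eq_prod]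
  have h1 : IntegrableOn (Function.uncurry f) (Icc a b ×ˢ Icc c d) volume :=
    hf.continuousOn.integrableOn_compact (isCompact_Icc.prod isCompact_Icc)
  exact h1.mono_set (Set.prod_mono Set.Ioc_subset_Icc_self Set.Ioc_subset_Icc_self)

lemma collar_half {a b : ℝ} (hab : a < b) (g g' : ℝ → ℝ → ℝ) (t : ℝ → ℝ)
    (hg : Continuous fun p : ℝ × ℝ => g p.1 p.2)
    (hg' : Continuous fun p : ℝ × ℝ => g' p.1 p.2)
    (ht : Continuous t)
    (htrace : ∀ θ : ℝ, (b - a) * t θ ^ 2 ≤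
      2 * (∫ r in a..b, g r θ ^ 2) + 2 * (b - a) ^ 2 * ∫ r in a..b, g' r θ ^ 2) :
    (b - a) * (∫ θ in (0:ℝ)..(2 * Real.pi), t θ ^ 2) ≤
      2 * (∫ r in a..b, ∫ θ in (0:ℝ)..(2 * Real.pi), g r θ ^ 2 * Real.cosh r) +
      2 * (b - a) ^ 2 *
        ∫ r in a..b, ∫ θ in (0:ℝ)..(2 * Real.pi), g' r θ ^ 2 * Real.cosh r := by
  have h2π : (0:ℝ) ≤ 2 * Real.pi := by linarith [Real.pi_pos]
  have hab' : a ≤ b := hab.le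
  -- parametric continuity
  have hgsw : Continuous (Function.uncurry fun θ r => g r θ ^ 2) :=
    ((hg.comp continuous_swap).pow 2)
  have hg'sw : Continuous (Function.uncurry fun θ r => g' r θ ^ 2) :=
    ((hg'.comp continuous_swap).pow 2)
  have cF : Continuous fun θ => ∫ r in a..b, g r θ ^ 2 :=
    continuous_parametric_intervalIntegral_of_continuous' (μ := volume) hgsw a b
  have cE : Continuous fun θ => ∫ r in a..b, g' r θ ^ 2 :=
    continuous_parametric_intervalIntegral_of_continuous' (μ := volume) hg'sw a b
  have cFr : Continuous fun r => ∫ θ in (0:ℝ)..(2 * Real.pi), g r θ ^ 2 :=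
    continuous_parametric_intervalIntegral_of_continuous' (μ := volume)
      (by exact (hg.pow 2) : Continuous (Function.uncurry fun r θ => g r θ ^ 2)) 0 (2 * Real.pi)
  have cEr : Continuous fun r => ∫ θ in (0:ℝ)..(2 * Real.pi), g' r θ ^ 2 :=
    continuous_parametric_intervalIntegral_of_continuous' (μ := volume)
      (by exact (hg'.pow 2) : Continuous (Function.uncurry fun r θ => g' r θ ^ 2)) 0 (2 * Real.pi)
  -- step 1 : integrate the trace inequality in θ
  have step1 : (b - a) * (∫ θ in (0:ℝ)..(2 * Real.pi), t θ ^ 2) ≤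
      2 * (∫ θ in (0:ℝ)..(2 * Real.pi), ∫ r in a..b, g r θ ^ 2) +
      2 * (b - a) ^ 2 * ∫ θ in (0:ℝ)..(2 * Real.pi), ∫ r in a..b, g' r θ ^ 2 := by
    have hmono := intervalIntegral.integral_mono_on (μ := volume) h2π
      ((continuous_const.mul (ht.pow 2)).intervalIntegrable 0 (2 * Real.pi))
      (((continuous_const.mul cF).add (continuous_const.mul cE)).intervalIntegrable 0 (2 * Real.pi))
      (fun θ _ => htrace θ)
    simp only [Pi.mul_apply, Pi.add_apply, Pi.pow_apply] at hmono
    rw [intervalIntegral.integral_add ((cF.intervalIntegrable _ _).const_mul _)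
        ((cE.intervalIntegrable _ _).const_mul _),
      intervalIntegral.integral_const_mul, intervalIntegral.integral_const_mul,
      intervalIntegral.integral_const_mul] at hmono
    exact hmono
  -- step 2 : Fubini
  have swF : (∫ θ in (0:ℝ)..(2 * Real.pi), ∫ r in a..b, g r θ ^ 2) =
      ∫ r in a..b, ∫ θ in (0:ℝ)..(2 * Real.pi), g r θ ^ 2 :=
    collar_swap_integral hgsw h2π hab'
  have swE : (∫ θ in (0:ℝ)..(2 * Real.pi), ∫ r in a..b, g' r θ ^ 2) =
      ∫ r in a..b, ∫ θ in (0:ℝ)..(2 * Real.pi), g' r θ ^ 2 :=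
    collar_swap_integral hg'sw h2π hab'
  -- step 3 : insert the weight cosh
  have wF : (∫ r in a..b, ∫ θ in (0:ℝ)..(2 * Real.pi), g r θ ^ 2) ≤
      ∫ r in a..b, ∫ θ in (0:ℝ)..(2 * Real.pi), g r θ ^ 2 * Real.cosh r := by
    have hinner : ∀ r, (∫ θ in (0:ℝ)..(2 * Real.pi), g r θ ^ 2 * Real.cosh r) =
        (∫ θ in (0:ℝ)..(2 * Real.pi), g r θ ^ 2) * Real.cosh r := fun r =>
      intervalIntegral.integral_mul_const _ _
    simp_rw [hinner]
    apply intervalIntegral.integral_mono_on (μ := volume) hab' (cFr.intervalIntegrable _ _)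
      ((cFr.mul Real.continuous_cosh).intervalIntegrable _ _)
    intro r _
    exact le_mul_of_one_le_right
      (intervalIntegral.integral_nonneg h2π fun θ _ => sq_nonneg _) (Real.one_le_cosh r)
  have wE : (∫ r in a..b, ∫ θ in (0:ℝ)..(2 * Real.pi), g' r θ ^ 2) ≤
      ∫ r in a..b, ∫ θ in (0:ℝ)..(2 * Real.pi), g' r θ ^ 2 * Real.cosh r := by
    have hinner : ∀ r, (∫ θ in (0:ℝ)..(2 * Real.pi), g' r θ ^ 2 * Real.cosh r) =
        (∫ θ in (0:ℝ)..(2 * Real.pi), g' r θ ^ 2) * Real.cosh r := fun r =>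
      intervalIntegral.integral_mul_const _ _
    simp_rw [hinner]
    apply intervalIntegral.integral_mono_on (μ := volume) hab' (cEr.intervalIntegrable _ _)
      ((cEr.mul Real.continuous_cosh).intervalIntegrable _ _)
    intro r _
    exact le_mul_of_one_le_right
      (intervalIntegral.integral_nonneg h2π fun θ _ => sq_nonneg _) (Real.one_le_cosh r)
  rw [swF, swE] at step1
  nlinarith [step1, wF, wE, sq_nonneg (b - a)]

end CollarHelpers

open MeasureTheory intervalIntegral Set


/-- Collar estimate in Fermi coordinates: for every `m > 0` and `λ > 0` there is
`A > 0` such that for all continuously differentiable functions `u` on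
`[0,m] × ℝ` and `w` on `[-m,0] × ℝ`, `2π`-periodic in the second variable,
the localized energies dominate `A` times the square of the jump of the
`θ`-integrals across the central geodesic `r = 0`. -/
theorem collar_estimate (m lam : ℝ) (hm : 0 < m) (hlam : 0 < lam) :
    ∃ A > (0:ℝ), ∀ u u' w w' : ℝ → ℝ → ℝ,
      ContDiffOn ℝ 1 (fun p : ℝ × ℝ => u p.1 p.2)
        (Set.Icc 0 m ×ˢ (Set.univ : Set ℝ)) →
      ContDiffOn ℝ 1 (fun p : ℝ × ℝ => w p.1 p.2)
        (Set.Icc (-m) 0 ×ˢ (Set.univ : Set ℝ)) →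
      (∀ θ : ℝ, ∀ r ∈ Set.Icc (0:ℝ) m, HasDerivAt (fun s => u s θ) (u' r θ) r) →
      (∀ θ : ℝ, ∀ r ∈ Set.Icc (-m) (0:ℝ), HasDerivAt (fun s => w s θ) (w' r θ) r) →
      ContinuousOn (fun p : ℝ × ℝ => u' p.1 p.2)
        (Set.Icc 0 m ×ˢ (Set.univ : Set ℝ)) →
      ContinuousOn (fun p : ℝ × ℝ => w' p.1 p.2)
        (Set.Icc (-m) 0 ×ˢ (Set.univ : Set ℝ)) →
      (∀ r θ : ℝ, u r (θ + 2 * Real.pi) = u r θ) →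
      (∀ r θ : ℝ, w r (θ + 2 * Real.pi) = w r θ) →
      A * (∫ θ in (0:ℝ)..(2 * Real.pi), (u 0 θ - w 0 θ)) ^ 2 ≤
        (∫ r in (0:ℝ)..m,
            ∫ θ in (0:ℝ)..(2 * Real.pi), (u' r θ) ^ 2 * Real.cosh r) +
        (∫ r in (-m)..(0:ℝ),
            ∫ θ in (0:ℝ)..(2 * Real.pi), (w' r θ) ^ 2 * Real.cosh r) +
        lam *
          ((∫ r in (0:ℝ)..m,
              ∫ θ in (0:ℝ)..(2 * Real.pi), (u r θ) ^ 2 * Real.cosh r) +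
           (∫ r in (-m)..(0:ℝ),
              ∫ θ in (0:ℝ)..(2 * Real.pi), (w r θ) ^ 2 * Real.cosh r)) := by
  have hπ := Real.pi_pos
  have h2π : (0:ℝ) ≤ 2 * Real.pi := by linarith
  set K := 8 * Real.pi * m + 8 * Real.pi / (m * lam) with hKdef
  have hK : 0 < K := by positivity
  refine ⟨K⁻¹, by positivity, ?_⟩
  intro u u' w w' hu hw hdu hdw hcu' hcw' _ _
  -- clamping maps
  set c1 : ℝ → ℝ := fun r => max 0 (min r m) with hc1def
  set c2 : ℝ → ℝ := fun r => min 0 (max r (-m)) with hc2def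
  have hc1c : Continuous c1 := continuous_const.max (continuous_id.min continuous_const)
  have hc2c : Continuous c2 := continuous_const.min (continuous_id.max continuous_const)
  have hc1m : ∀ r, c1 r ∈ Icc (0:ℝ) m := fun r =>
    ⟨le_max_left _ _, max_le hm.le (min_le_right _ _)⟩
  have hc2m : ∀ r, c2 r ∈ Icc (-m) (0:ℝ) := fun r =>
    ⟨le_min (by linarith) (le_max_right _ _), min_le_left _ _⟩
  have hc1id : ∀ r ∈ Icc (0:ℝ) m, c1 r = r := fun r hr => by
    simp [hc1def, min_eq_left hr.2, max_eq_right hr.1]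
  have hc2id : ∀ r ∈ Icc (-m) (0:ℝ), c2 r = r := fun r hr => by
    simp [hc2def, max_eq_left hr.1, min_eq_right hr.2]
  -- globally continuous clamped versions
  have hU : Continuous fun p : ℝ × ℝ => u (c1 p.1) p.2 :=
    hu.continuousOn.comp_continuous
      ((hc1c.comp continuous_fst).prodMk continuous_snd)
      (fun p => ⟨hc1m _, Set.mem_univ _⟩)
  have hU' : Continuous fun p : ℝ × ℝ => u' (c1 p.1) p.2 :=
    hcu'.comp_continuous
      ((hc1c.comp continuous_fst).prodMk continuous_snd)
      (fun p => ⟨hc1m _, Set.mem_univ _⟩)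
  have hW : Continuous fun p : ℝ × ℝ => w (c2 p.1) p.2 :=
    hw.continuousOn.comp_continuous
      ((hc2c.comp continuous_fst).prodMk continuous_snd)
      (fun p => ⟨hc2m _, Set.mem_univ _⟩)
  have hW' : Continuous fun p : ℝ × ℝ => w' (c2 p.1) p.2 :=
    hcw'.comp_continuous
      ((hc2c.comp continuous_fst).prodMk continuous_snd)
      (fun p => ⟨hc2m _, Set.mem_univ _⟩)
  have hc10 : c1 0 = 0 := hc1id 0 ⟨le_rfl, hm.le⟩
  have hc20 : c2 0 = 0 := hc2id 0 ⟨by linarith, le_rfl⟩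
  have hcontu0 : Continuous fun θ => u 0 θ := by
    have h := hU.comp ((continuous_const (y := (0:ℝ))).prodMk continuous_id)
    simpa [Function.comp_def, hc10] using h
  have hcontw0 : Continuous fun θ => w 0 θ := by
    have h := hW.comp ((continuous_const (y := (0:ℝ))).prodMk continuous_id)
    simpa [Function.comp_def, hc20] using h
  -- rewrite goal integrals in clamped form
  have eIU : (∫ r in (0:ℝ)..m,
        ∫ θ in (0:ℝ)..(2 * Real.pi), (u r θ) ^ 2 * Real.cosh r) =
      ∫ r in (0:ℝ)..m,
        ∫ θ in (0:ℝ)..(2 * Real.pi), (u (c1 r) θ) ^ 2 * Real.cosh r :=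
    intervalIntegral.integral_congr fun r hr => by
      rw [hc1id r (by rwa [uIcc_of_le hm.le] at hr)]
  have eEU : (∫ r in (0:ℝ)..m,
        ∫ θ in (0:ℝ)..(2 * Real.pi), (u' r θ) ^ 2 * Real.cosh r) =
      ∫ r in (0:ℝ)..m,
        ∫ θ in (0:ℝ)..(2 * Real.pi), (u' (c1 r) θ) ^ 2 * Real.cosh r :=
    intervalIntegral.integral_congr fun r hr => by
      rw [hc1id r (by rwa [uIcc_of_le hm.le] at hr)]
  have eIW : (∫ r in (-m)..(0:ℝ),
        ∫ θ in (0:ℝ)..(2 * Real.pi), (w r θ) ^ 2 * Real.cosh r) =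
      ∫ r in (-m)..(0:ℝ),
        ∫ θ in (0:ℝ)..(2 * Real.pi), (w (c2 r) θ) ^ 2 * Real.cosh r :=
    intervalIntegral.integral_congr fun r hr => by
      rw [hc2id r (by rwa [uIcc_of_le (by linarith : (-m:ℝ) ≤ 0)] at hr)]
  have eEW : (∫ r in (-m)..(0:ℝ),
        ∫ θ in (0:ℝ)..(2 * Real.pi), (w' r θ) ^ 2 * Real.cosh r) =
      ∫ r in (-m)..(0:ℝ),
        ∫ θ in (0:ℝ)..(2 * Real.pi), (w' (c2 r) θ) ^ 2 * Real.cosh r :=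
    intervalIntegral.integral_congr fun r hr => by
      rw [hc2id r (by rwa [uIcc_of_le (by linarith : (-m:ℝ) ≤ 0)] at hr)]
  rw [eIU, eEU, eIW, eEW]
  set IU := ∫ r in (0:ℝ)..m,
      ∫ θ in (0:ℝ)..(2 * Real.pi), (u (c1 r) θ) ^ 2 * Real.cosh r with hIU
  set EU := ∫ r in (0:ℝ)..m,
      ∫ θ in (0:ℝ)..(2 * Real.pi), (u' (c1 r) θ) ^ 2 * Real.cosh r with hEU
  set IW := ∫ r in (-m)..(0:ℝ),
      ∫ θ in (0:ℝ)..(2 * Real.pi), (w (c2 r) θ) ^ 2 * Real.cosh r with hIW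
  set EW := ∫ r in (-m)..(0:ℝ),
      ∫ θ in (0:ℝ)..(2 * Real.pi), (w' (c2 r) θ) ^ 2 * Real.cosh r with hEW
  set Ju := ∫ θ in (0:ℝ)..(2 * Real.pi), (u 0 θ) ^ 2 with hJu
  set Jw := ∫ θ in (0:ℝ)..(2 * Real.pi), (w 0 θ) ^ 2 with hJw
  set J := ∫ θ in (0:ℝ)..(2 * Real.pi), (u 0 θ - w 0 θ) with hJ
  -- half-collar estimate for u
  have halfu : m * Ju ≤ 2 * IU + 2 * m ^ 2 * EU := by
    have h := collar_half (a := 0) (b := m) hm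
      (fun r θ => u (c1 r) θ) (fun r θ => u' (c1 r) θ) (fun θ => u 0 θ)
      hU hU' hcontu0 ?_
    · simpa only [sub_zero] using h
    · intro θ
      have hsec : ContinuousOn (fun s => u' s θ) (Icc (0:ℝ) m) := by
        have h1 : Continuous fun s => u' (c1 s) θ :=
          hU'.comp (continuous_id.prodMk continuous_const)
        exact h1.continuousOn.congr fun s hs => by show _ = u' (c1 s) θ; rw [hc1id s hs]
      have htr := collar_trace_left hm (fun s => u s θ) (fun s => u' s θ)
        (hdu θ) hsec
      have e1 : (∫ r in (0:ℝ)..m, u r θ ^ 2) = ∫ r in (0:ℝ)..m, u (c1 r) θ ^ 2 :=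
        intervalIntegral.integral_congr fun r hr => by
          rw [hc1id r (by rwa [uIcc_of_le hm.le] at hr)]
      have e2 : (∫ r in (0:ℝ)..m, u' r θ ^ 2) = ∫ r in (0:ℝ)..m, u' (c1 r) θ ^ 2 :=
        intervalIntegral.integral_congr fun r hr => by
          rw [hc1id r (by rwa [uIcc_of_le hm.le] at hr)]
      rw [e1, e2] at htr
      simpa using htr
  -- half-collar estimate for w
  have halfw : m * Jw ≤ 2 * IW + 2 * m ^ 2 * EW := by
    have hab : (-m:ℝ) < 0 := by linarith
    have h := collar_half (a := -m) (b := 0) hab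
      (fun r θ => w (c2 r) θ) (fun r θ => w' (c2 r) θ) (fun θ => w 0 θ)
      hW hW' hcontw0 ?_
    · simpa only [show (0:ℝ) - -m = m from by ring] using h
    · intro θ
      have hsec : ContinuousOn (fun s => w' s θ) (Icc (-m) (0:ℝ)) := by
        have h1 : Continuous fun s => w' (c2 s) θ :=
          hW'.comp (continuous_id.prodMk continuous_const)
        exact h1.continuousOn.congr fun s hs => by show _ = w' (c2 s) θ; rw [hc2id s hs]
      have htr := collar_trace_right hab (fun s => w s θ) (fun s => w' s θ)
        (hdw θ) hsec
      have e1 : (∫ r in (-m)..(0:ℝ), w r θ ^ 2) = ∫ r in (-m)..(0:ℝ), w (c2 r) θ ^ 2 :=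
        intervalIntegral.integral_congr fun r hr => by
          rw [hc2id r (by rwa [uIcc_of_le (by linarith : (-m:ℝ) ≤ 0)] at hr)]
      have e2 : (∫ r in (-m)..(0:ℝ), w' r θ ^ 2) = ∫ r in (-m)..(0:ℝ), w' (c2 r) θ ^ 2 :=
        intervalIntegral.integral_congr fun r hr => by
          rw [hc2id r (by rwa [uIcc_of_le (by linarith : (-m:ℝ) ≤ 0)] at hr)]
      rw [e1, e2] at htr
      simpa only [show (0:ℝ) - -m = m from by ring] using htr
  -- jump estimate via Cauchy-Schwarz
  have hcontd : Continuous fun θ => u 0 θ - w 0 θ := hcontu0.sub hcontw0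
  have hjump1 : J ^ 2 ≤ (2 * Real.pi) * ∫ θ in (0:ℝ)..(2 * Real.pi), (u 0 θ - w 0 θ) ^ 2 := by
    have h := sq_intervalIntegral_le h2π
      (hcontd.intervalIntegrable 0 (2 * Real.pi))
      ((hcontd.pow 2).intervalIntegrable 0 (2 * Real.pi))
    simpa [hJ] using h
  have hjump2 : (∫ θ in (0:ℝ)..(2 * Real.pi), (u 0 θ - w 0 θ) ^ 2) ≤ 2 * Ju + 2 * Jw := by
    have hmono : (∫ θ in (0:ℝ)..(2 * Real.pi), (u 0 θ - w 0 θ) ^ 2) ≤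
        ∫ θ in (0:ℝ)..(2 * Real.pi), (2 * (u 0 θ) ^ 2 + 2 * (w 0 θ) ^ 2) :=
      intervalIntegral.integral_mono_on (μ := volume) h2π
      ((hcontd.pow 2).intervalIntegrable 0 (2 * Real.pi))
      (((continuous_const.mul (hcontu0.pow 2)).add
        (continuous_const.mul (hcontw0.pow 2))).intervalIntegrable 0 (2 * Real.pi))
      (fun θ _ => by nlinarith [sq_nonneg (u 0 θ + w 0 θ)])
    rwa [intervalIntegral.integral_add (f := fun θ => 2 * u 0 θ ^ 2) (g := fun θ => 2 * w 0 θ ^ 2)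
        (((hcontu0.pow 2).intervalIntegrable _ _).const_mul _)
        (((hcontw0.pow 2).intervalIntegrable _ _).const_mul _),
      intervalIntegral.integral_const_mul, intervalIntegral.integral_const_mul] at hmono
  -- nonnegativity
  have hJu0 : 0 ≤ Ju := intervalIntegral.integral_nonneg h2π fun θ _ => sq_nonneg _
  have hJw0 : 0 ≤ Jw := intervalIntegral.integral_nonneg h2π fun θ _ => sq_nonneg _
  have hIU0 : 0 ≤ IU := intervalIntegral.integral_nonneg hm.le fun r _ =>
    intervalIntegral.integral_nonneg h2π fun θ _ =>
      mul_nonneg (sq_nonneg _) (Real.cosh_pos r).le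
  have hIW0 : 0 ≤ IW := intervalIntegral.integral_nonneg (by linarith) fun r _ =>
    intervalIntegral.integral_nonneg h2π fun θ _ =>
      mul_nonneg (sq_nonneg _) (Real.cosh_pos r).le
  have hEU0 : 0 ≤ EU := intervalIntegral.integral_nonneg hm.le fun r _ =>
    intervalIntegral.integral_nonneg h2π fun θ _ =>
      mul_nonneg (sq_nonneg _) (Real.cosh_pos r).le
  have hEW0 : 0 ≤ EW := intervalIntegral.integral_nonneg (by linarith) fun r _ =>
    intervalIntegral.integral_nonneg h2π fun θ _ =>
      mul_nonneg (sq_nonneg _) (Real.cosh_pos r).le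
  -- assemble
  clear_value K IU EU IW EW Ju Jw J
  have hJfull : J ^ 2 ≤ 4 * Real.pi * Ju + 4 * Real.pi * Jw := by
    have h := mul_le_mul_of_nonneg_left hjump2 h2π
    linarith only [hjump1, h]
  have hmkey : m * J ^ 2 ≤ 8 * Real.pi * (IU + IW) + 8 * Real.pi * m ^ 2 * (EU + EW) := by
    have h1 := mul_le_mul_of_nonneg_left hJfull hm.le
    have h2 := mul_le_mul_of_nonneg_left halfu (by positivity : (0:ℝ) ≤ 4 * Real.pi)
    have h3 := mul_le_mul_of_nonneg_left halfw (by positivity : (0:ℝ) ≤ 4 * Real.pi)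
    linarith only [h1, h2, h3]
  have hmK : m * K = 8 * Real.pi * m ^ 2 + 8 * Real.pi / lam := by
    rw [hKdef]; field_simp
  set t := 8 * Real.pi / lam with htdef
  have ht : t * lam = 8 * Real.pi := by rw [htdef]; field_simp
  have hbig : m * J ^ 2 ≤ m * (K * (EU + EW + lam * (IU + IW))) := by
    have expand : m * (K * (EU + EW + lam * (IU + IW))) =
        (8 * Real.pi * m ^ 2 + t) * (EU + EW) +
        (8 * Real.pi * m ^ 2 + t) * (lam * (IU + IW)) := by
      rw [← mul_assoc, hmK]; ring
    rw [expand]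
    have ha : 0 ≤ t * (EU + EW) := mul_nonneg (by positivity) (by linarith)
    have hb : 0 ≤ 8 * Real.pi * m ^ 2 * lam * (IU + IW) :=
      mul_nonneg (by positivity) (by linarith)
    have hc := congrArg (· * (IU + IW)) ht
    linarith only [hmkey, ha, hb, hc]
  have hkey : J ^ 2 ≤ K * (EU + EW + lam * (IU + IW)) :=
    le_of_mul_le_mul_left hbig hm
  calc K⁻¹ * J ^ 2 ≤ K⁻¹ * (K * (EU + EW + lam * (IU + IW))) :=
        mul_le_mul_of_nonneg_left hkey (inv_nonneg.2 hK.le)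
    _ = EU + EW + lam * (IU + IW) := by
        rw [← mul_assoc, inv_mul_cancel₀ hK.ne', one_mul]
end
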